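/- arXiv:1408.3913 — 5 statements merged into one kernel-verified Lean document; each statement's English description precedes it below -/
import Mathlib

section
/- Let g be a Heisenberg restricted Lie algebra of dimension 2n−1 over an algebraically closed field of characteristic p > 2, with center z and quotient W = g/z equipped with its induced symplectic form, and let φ: g → W be the projection. Then ε ↦ φ(ε) gives a bijection between elementary subalgebras of g of dimension n and Lagrangian (i.e., maximal isotropic, dimension n−1) subspaces of W; in particular, for every Lagrangian subspace L ⊆ W, the preimage φ^{-1}(L) is an elementary subalgebra of g of dimension n. -/
lemma heisenberg_aux {k : Type*} [Field k]
    {L : Type*} [LieRing L] [LieAlgebra k L] [Module.Finite k L]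
    (pOp : L → L) (hpOp : ∀ x : L, pOp x = 0)
    (n : ℕ) (hn : 1 ≤ n) (hdim : Module.finrank k L = 2 * n - 1)
    (Z : Submodule k L) (hmemZ : ∀ x : L, x ∈ Z ↔ ∀ y : L, ⁅y, x⁆ = 0)
    (yn : L) (hyn : Z = Submodule.span k {yn})
    (B : (L ⧸ Z) →ₗ[k] (L ⧸ Z) →ₗ[k] k)
    (hB : ∀ x y : L, ⁅x, y⁆ = B (Z.mkQ x) (Z.mkQ y) • yn) :
    (∀ ε : LieSubalgebra k L,
       (∀ x ∈ ε, ∀ y ∈ ε, ⁅x, y⁆ = 0) → (∀ x ∈ ε, pOp x = 0) →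
       Module.finrank k ε = n →
       (∀ v ∈ Submodule.map Z.mkQ ε.toSubmodule,
          ∀ w ∈ Submodule.map Z.mkQ ε.toSubmodule,
          B v w = 0) ∧
       Module.finrank k (Submodule.map Z.mkQ ε.toSubmodule) = n - 1)
    ∧
    (∀ L' : Submodule k (L ⧸ Z),
       (∀ v ∈ L', ∀ w ∈ L', B v w = 0) → Module.finrank k L' = n - 1 →
       (∃! ε : LieSubalgebra k L,
          (∀ x ∈ ε, ∀ y ∈ ε, ⁅x, y⁆ = 0) ∧ (∀ x ∈ ε, pOp x = 0) ∧
          Module.finrank k ε = n ∧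
          Submodule.map Z.mkQ ε.toSubmodule = L') ∧
       (∃ ε : LieSubalgebra k L,
          (∀ x ∈ ε, ∀ y ∈ ε, ⁅x, y⁆ = 0) ∧ (∀ x ∈ ε, pOp x = 0) ∧
          Module.finrank k ε = n ∧
          ε.toSubmodule = Submodule.comap Z.mkQ L')) := by
  classical
  -- yn ≠ 0
  have hyn0 : yn ≠ 0 := by
    intro h
    have hab : ∀ x y : L, ⁅x, y⁆ = 0 := by
      intro x y; rw [hB x y, h, smul_zero]
    have htop : Z = ⊤ := by
      ext x; simpa [hmemZ] using fun y => hab y x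
    have hbot : (⊤ : Submodule k L) = ⊥ := by
      rw [← htop, hyn, h, Submodule.span_zero_singleton]
    have h0 : Module.finrank k L = 0 := by
      rw [← finrank_top k L, hbot, finrank_bot]
    omega
  have hZrank : Module.finrank k Z = 1 := by
    rw [hyn]; exact finrank_span_singleton hyn0
  have hW : Module.finrank k (L ⧸ Z) = 2 * n - 2 := by
    have h := Submodule.finrank_quotient_add_finrank Z
    omega
  have hc : ∀ c : k, c • yn = 0 → c = 0 := by
    intro c hcy
    rcases smul_eq_zero.mp hcy with h | h
    · exact h
    · exact absurd h hyn0
  have hskew : ∀ v w, B w v = -B v w := by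
    intro v w
    obtain ⟨x, rfl⟩ := Z.mkQ_surjective v
    obtain ⟨y, rfl⟩ := Z.mkQ_surjective w
    have h : (B (Z.mkQ x)) (Z.mkQ y) • yn + (B (Z.mkQ y)) (Z.mkQ x) • yn = 0 := by
      rw [← hB x y, ← hB y x, ← lie_skew x y]
      exact neg_add_cancel _
    have h2 := hc _ (by rw [add_smul]; exact h)
    exact eq_neg_of_add_eq_zero_right h2
  have hrefl : LinearMap.BilinForm.IsRefl B := by
    intro v w h
    rw [hskew v w, h, neg_zero]
  have hnd : LinearMap.BilinForm.Nondegenerate B := by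
    refine (LinearMap.IsRefl.nondegenerate_iff_separatingLeft hrefl).mpr ?_
    intro v hv
    obtain ⟨x, rfl⟩ := Z.mkQ_surjective v
    have hx : x ∈ Z := by
      rw [hmemZ]
      intro y
      rw [hB y x, hskew (Z.mkQ x) (Z.mkQ y), hv (Z.mkQ y), neg_zero, zero_smul]
    exact (Submodule.Quotient.mk_eq_zero Z).mpr hx
  have hiso_bound : ∀ U : Submodule k (L ⧸ Z),
      (∀ v ∈ U, ∀ w ∈ U, B v w = 0) → Module.finrank k U ≤ n - 1 := by
    intro U hU
    have hle : U ≤ LinearMap.BilinForm.orthogonal B U := by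
      intro w hw
      rw [LinearMap.BilinForm.mem_orthogonal_iff]
      intro v hv
      exact hU v hv w hw
    have h1 : Module.finrank k U ≤
        Module.finrank k (LinearMap.BilinForm.orthogonal B U) :=
      Submodule.finrank_mono hle
    have h2 := LinearMap.BilinForm.finrank_orthogonal (B := B) hnd U
    have h3 : Module.finrank k U ≤ Module.finrank k (L ⧸ Z) := Submodule.finrank_le U
    omega
  have key : ∀ q : Submodule k L,
      Module.finrank k (Submodule.map Z.mkQ q) + Module.finrank k ↥(Z ⊓ q) =
        Module.finrank k q := by
    intro q
    have h := LinearMap.finrank_range_add_finrank_ker (Z.mkQ ∘ₗ q.subtype)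
    rw [LinearMap.range_comp, Submodule.range_subtype, LinearMap.ker_comp,
      Submodule.ker_mkQ] at h
    have e : Submodule.comap q.subtype Z = Submodule.comap q.subtype (Z ⊓ q) := by
      ext x; simp [Submodule.mem_comap, x.2]
    rw [e, LinearEquiv.finrank_eq
      (Submodule.comapSubtypeEquivOfLe (inf_le_right : Z ⊓ q ≤ q))] at h
    exact h
  have hZinf_le : ∀ q : Submodule k L, Module.finrank k ↥(Z ⊓ q) ≤ 1 := by
    intro q
    calc Module.finrank k ↥(Z ⊓ q) ≤ Module.finrank k Z :=
          Submodule.finrank_mono inf_le_left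
      _ = 1 := hZrank
  constructor
  · -- part (i)
    intro ε hab _ hd
    have hd' : Module.finrank k ε.toSubmodule = n := hd
    have hiso : ∀ v ∈ Submodule.map Z.mkQ ε.toSubmodule,
        ∀ w ∈ Submodule.map Z.mkQ ε.toSubmodule, B v w = 0 := by
      intro v hv w hw
      obtain ⟨x, hx, rfl⟩ := hv
      obtain ⟨y, hy, rfl⟩ := hw
      apply hc
      rw [← hB x y]
      exact hab x hx y hy
    refine ⟨hiso, ?_⟩
    have h1 := key ε.toSubmodule
    have h2 := hZinf_le ε.toSubmodule
    have h3 := hiso_bound _ hiso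
    omega
  · -- part (ii)
    intro L' hiso hdL'
    have hZE : Z ≤ Submodule.comap Z.mkQ L' := by
      intro x hx
      have h0 : Z.mkQ x = 0 := (Submodule.Quotient.mk_eq_zero Z).mpr hx
      simp only [Submodule.mem_comap, h0]
      exact L'.zero_mem
    have hbr : ∀ x ∈ Submodule.comap Z.mkQ L', ∀ y ∈ Submodule.comap Z.mkQ L',
        ⁅x, y⁆ = 0 := by
      intro x hx y hy
      rw [hB x y, hiso _ (Submodule.mem_comap.mp hx) _ (Submodule.mem_comap.mp hy),
        zero_smul]
    have hmapE : Submodule.map Z.mkQ (Submodule.comap Z.mkQ L') = L' := by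
      rw [Submodule.map_comap_eq, Submodule.range_mkQ, top_inf_eq]
    have hrankE : Module.finrank k (Submodule.comap Z.mkQ L') = n := by
      have h1 := key (Submodule.comap Z.mkQ L')
      have hinf : Z ⊓ Submodule.comap Z.mkQ L' = Z := inf_eq_left.mpr hZE
      rw [hmapE, hinf, hZrank, hdL'] at h1
      omega
    let ε₀ : LieSubalgebra k L :=
      { toSubmodule := Submodule.comap Z.mkQ L'
        lie_mem' := fun {x y} hx hy => by
          have h := hbr x hx y hy
          show ⁅x, y⁆ ∈ Submodule.comap Z.mkQ L'
          rw [h]; exact Submodule.zero_mem _ }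
    have hε₀sub : ε₀.toSubmodule = Submodule.comap Z.mkQ L' := rfl
    have hP : (∀ x ∈ ε₀, ∀ y ∈ ε₀, ⁅x, y⁆ = 0) ∧ (∀ x ∈ ε₀, pOp x = 0) ∧
        Module.finrank k ε₀ = n ∧ Submodule.map Z.mkQ ε₀.toSubmodule = L' := by
      refine ⟨fun x hx y hy => hbr x hx y hy, fun x _ => hpOp x, hrankE, ?_⟩
      rw [hε₀sub, hmapE]
    refine ⟨⟨ε₀, hP, ?_⟩, ⟨ε₀, hP.1, hP.2.1, hP.2.2.1, hε₀sub⟩⟩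
    rintro ε' ⟨_, _, hd', hmap'⟩
    apply LieSubalgebra.toSubmodule_injective
    have hle : ε'.toSubmodule ≤ Submodule.comap Z.mkQ L' := by
      rw [← hmap']
      exact Submodule.le_comap_map _ _
    have hd'' : Module.finrank k ε'.toSubmodule =
        Module.finrank k (Submodule.comap Z.mkQ L') := by
      rw [hrankE]; exact hd'
    rw [hε₀sub]
    exact Submodule.eq_of_le_of_finrank_eq hle hd''

/-- For a Heisenberg restricted Lie algebra `L` of dimension `2n-1`
(center `z` spanned by `yn`, vanishing `p`-power operation) over an algebraically
closed field of characteristic `p > 2`, with `W = L/z` carrying the induced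
symplectic form `B` (so that `⁅x,y⁆ = B x̄ ȳ • yn`), the map `ε ↦ φ(ε)` is a
bijection between elementary subalgebras of dimension `n` and Lagrangian
(isotropic of dimension `n-1`) subspaces of `W`; in particular `φ⁻¹(L')` is an
elementary subalgebra of dimension `n` for every Lagrangian `L' ⊆ W`. -/
theorem stmt_1 {k : Type*} [Field k] [IsAlgClosed k] {p : ℕ} [Fact p.Prime] [CharP k p]
    (hp : 2 < p)
    {L : Type*} [LieRing L] [LieAlgebra k L] [Module.Finite k L]
    (pOp : L → L) (hpOp : ∀ x : L, pOp x = 0)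
    (n : ℕ) (hn : 1 ≤ n) (hdim : Module.finrank k L = 2 * n - 1)
    (yn : L) (hyn : (LieAlgebra.center k L).toSubmodule = Submodule.span k {yn})
    -- the symplectic form on W = L / z induced by the bracket:
    (B : (L ⧸ (LieAlgebra.center k L).toSubmodule) →ₗ[k]
         (L ⧸ (LieAlgebra.center k L).toSubmodule) →ₗ[k] k)
    (hB : ∀ x y : L,
      ⁅x, y⁆ = B ((LieAlgebra.center k L).toSubmodule.mkQ x)
                 ((LieAlgebra.center k L).toSubmodule.mkQ y) • yn) :
    -- (i) the image of an elementary subalgebra of dimension n is Lagrangian: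
    (∀ ε : LieSubalgebra k L,
       (∀ x ∈ ε, ∀ y ∈ ε, ⁅x, y⁆ = 0) → (∀ x ∈ ε, pOp x = 0) →
       Module.finrank k ε = n →
       (∀ v ∈ Submodule.map (LieAlgebra.center k L).toSubmodule.mkQ ε.toSubmodule,
          ∀ w ∈ Submodule.map (LieAlgebra.center k L).toSubmodule.mkQ ε.toSubmodule,
          B v w = 0) ∧
       Module.finrank k
         (Submodule.map (LieAlgebra.center k L).toSubmodule.mkQ ε.toSubmodule) = n - 1)
    ∧
    -- (ii) every Lagrangian subspace arises from a unique elementary subalgebra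
    -- of dimension n, namely the preimage φ⁻¹(L'):
    (∀ L' : Submodule k (L ⧸ (LieAlgebra.center k L).toSubmodule),
       (∀ v ∈ L', ∀ w ∈ L', B v w = 0) → Module.finrank k L' = n - 1 →
       (∃! ε : LieSubalgebra k L,
          (∀ x ∈ ε, ∀ y ∈ ε, ⁅x, y⁆ = 0) ∧ (∀ x ∈ ε, pOp x = 0) ∧
          Module.finrank k ε = n ∧
          Submodule.map (LieAlgebra.center k L).toSubmodule.mkQ ε.toSubmodule = L') ∧
       (∃ ε : LieSubalgebra k L,
          (∀ x ∈ ε, ∀ y ∈ ε, ⁅x, y⁆ = 0) ∧ (∀ x ∈ ε, pOp x = 0) ∧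
          Module.finrank k ε = n ∧
          ε.toSubmodule = Submodule.comap (LieAlgebra.center k L).toSubmodule.mkQ L')) := by
  exact heisenberg_aux pOp hpOp n hn hdim (LieAlgebra.center k L).toSubmodule
    (fun x => by
      rw [LieSubmodule.mem_toSubmodule]
      exact LieModule.mem_maxTrivSubmodule k L L x)
    yn hyn B hB
end

section
/- Let k be an algebraically closed field of characteristic p > 2 and m ≥ 1. Let u_{m,m} ⊂ sl_{2m}(k) be the set of block matrices of the form [[0, A],[0, 0]] with A an m×m matrix. Then u_{m,m} is an elementary subalgebra of sl_{2m}(k) of dimension m², and every elementary subalgebra of sl_{2m}(k) of dimension m² contained in the strictly upper triangular matrices equals u_{m,m}. -/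
open Module Submodule Matrix

/-! ### Coordinate subspaces of `ι → k` -/

section Coord

variable {k : Type*} [Field k] {ι : Type*} [Fintype ι] [DecidableEq ι]

/-- The subspace of functions supported where `P` holds. -/
def coordSub (k : Type*) [Field k] {ι : Type*} (P : ι → Prop) : Submodule k (ι → k) where
  carrier := {v | ∀ i, ¬ P i → v i = 0}
  add_mem' := by intro a b ha hb i hi; simp [ha i hi, hb i hi]
  zero_mem' := by intro i _; rfl
  smul_mem' := by intro c v hv i hi; simp [hv i hi]

lemma mem_coordSub {P : ι → Prop} {v : ι → k} :
    v ∈ coordSub k P ↔ ∀ i, ¬ P i → v i = 0 := Iff.rfl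

lemma finrank_coordSub {κ : Type*} [Fintype κ] (P : ι → Prop) (e : κ → ι)
    (he : Function.Injective e) (hP : ∀ i, P i ↔ ∃ j, e j = i) :
    finrank k (coordSub k P) = Fintype.card κ := by
  classical
  have hspan : coordSub k P = Submodule.span k (Set.range fun j => (Pi.single (e j) 1 : ι → k)) := by
    apply le_antisymm
    · intro v hv
      have hv' := (mem_coordSub (k := k)).1 hv
      have hsum : v = ∑ i, Pi.single i (v i) := (Finset.univ_sum_single v).symm
      rw [hsum]
      refine Submodule.sum_mem _ fun i _ => ?_
      by_cases hPi : P i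
      · obtain ⟨j, rfl⟩ := (hP i).1 hPi
        have heq : (Pi.single (e j) (v (e j)) : ι → k) = v (e j) • (Pi.single (e j) 1 : ι → k) := by
          funext x
          by_cases hx : x = e j
          · subst hx; simp
          · simp [Pi.single_eq_of_ne hx]
        rw [heq]
        exact Submodule.smul_mem _ _ (Submodule.subset_span ⟨j, rfl⟩)
      · rw [hv' i hPi]
        simp
    · rw [Submodule.span_le]
      rintro _ ⟨j, rfl⟩
      intro i hi
      have hne : i ≠ e j := by
        intro h
        exact hi (h ▸ (hP (e j)).2 ⟨j, rfl⟩)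
      exact Pi.single_eq_of_ne hne 1
  rw [hspan]
  have hli : LinearIndependent k fun j => (Pi.single (e j) 1 : ι → k) := by
    have h2 := (Pi.basisFun k ι).linearIndependent.comp e he
    have heq : (fun j => (Pi.single (e j) 1 : ι → k)) = (Pi.basisFun k ι) ∘ e := by
      funext j; simp [Pi.basisFun_apply]
    rw [heq]
    exact h2
  exact finrank_span_eq_card hli

end Coord

/-! ### Coordinate subspaces of matrices -/

section MatSub

variable {k : Type*} [Field k] {N : ℕ}

/-- The subspace of matrices supported where `P` holds. -/
def matSub (k : Type*) [Field k] {N : ℕ} (P : Fin N → Fin N → Prop) :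
    Submodule k (Matrix (Fin N) (Fin N) k) where
  carrier := {X | ∀ i j, ¬ P i j → X i j = 0}
  add_mem' := by intro a b ha hb i j hij; simp [Matrix.add_apply, ha i j hij, hb i j hij]
  zero_mem' := by intro i j _; rfl
  smul_mem' := by intro c X hX i j hij; simp [Matrix.smul_apply, hX i j hij]

lemma mem_matSub {P : Fin N → Fin N → Prop} {X : Matrix (Fin N) (Fin N) k} :
    X ∈ matSub k P ↔ ∀ i j, ¬ P i j → X i j = 0 := Iff.rfl

lemma finrank_matSub {κ : Type*} [Fintype κ] (P : Fin N → Fin N → Prop)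
    (e : κ → Fin N × Fin N) (he : Function.Injective e)
    (hP : ∀ i j, P i j ↔ ∃ c, e c = (i, j)) :
    finrank k (matSub k P) = Fintype.card κ := by
  classical
  have hspan : matSub k P
      = Submodule.span k (Set.range fun c => Matrix.single (e c).1 (e c).2 (1 : k)) := by
    apply le_antisymm
    · intro X hX
      have hX' := (mem_matSub (k := k)).1 hX
      have hsum : X = ∑ i, ∑ j, Matrix.single i j (X i j) :=
        matrix_eq_sum_single X
      rw [hsum]
      refine Submodule.sum_mem _ fun i _ => Submodule.sum_mem _ fun j _ => ?_
      by_cases hPij : P i j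
      · obtain ⟨c, hc⟩ := (hP i j).1 hPij
        have hmem : Matrix.single i j (1 : k) ∈ Submodule.span k
            (Set.range fun c => Matrix.single (e c).1 (e c).2 (1 : k)) := by
          have h0 := Submodule.subset_span (R := k)
            (Set.mem_range_self (f := fun c => Matrix.single (e c).1 (e c).2 (1 : k)) c)
          rw [hc] at h0
          exact h0
        have heq : Matrix.single i j (X i j) = X i j • Matrix.single i j (1 : k) := by
          rw [Matrix.smul_single, smul_eq_mul, mul_one]
        rw [heq]
        exact Submodule.smul_mem _ _ hmem
      · rw [hX' i j hPij]
        simp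
    · rw [Submodule.span_le]
      rintro _ ⟨c, rfl⟩
      intro i j hij
      have hne : ¬((e c).1 = i ∧ (e c).2 = j) := by
        rintro ⟨h1, h2⟩
        exact hij ((hP i j).2 ⟨c, Prod.ext h1 h2⟩)
      simp [Matrix.single]
      intro h1 h2
      exact absurd ⟨h1, h2⟩ hne
  rw [hspan]
  have hli : LinearIndependent k fun c => Matrix.single (e c).1 (e c).2 (1 : k) := by
    have h2 := (Matrix.stdBasis k (Fin N) (Fin N)).linearIndependent.comp e he
    have heq : (fun c => Matrix.single (e c).1 (e c).2 (1 : k))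
        = (Matrix.stdBasis k (Fin N) (Fin N)) ∘ e := by
      funext c
      rw [Function.comp_apply, show e c = ((e c).1, (e c).2) from rfl,
        Matrix.stdBasis_eq_single]
    rw [heq]
    exact h2
  exact finrank_span_eq_card hli

end MatSub

/-! ### Dual pairing bound -/

section DualPair

variable {k : Type*} [Field k] {ι : Type*} [Fintype ι] [DecidableEq ι]

/-- The pairing map against a subspace `W`. -/
noncomputable def pairMap (W : Submodule k (ι → k)) : (ι → k) →ₗ[k] Module.Dual k W where
  toFun v :=
    { toFun := fun w => ∑ i, (w : ι → k) i * v i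
      map_add' := by intro w w'; simp [add_mul, Finset.sum_add_distrib]
      map_smul' := by intro c w; simp [Finset.mul_sum, mul_assoc] }
  map_add' := by intro v v'; ext w; simp [mul_add, Finset.sum_add_distrib]
  map_smul' := by intro c v; ext w; simp [Finset.mul_sum, mul_comm, mul_assoc, mul_left_comm]

lemma mem_ker_pairMap {W : Submodule k (ι → k)} {v : ι → k} :
    v ∈ LinearMap.ker (pairMap W) ↔ ∀ w ∈ W, ∑ i, w i * v i = 0 := by
  constructor
  · intro hv w hw
    have := LinearMap.congr_fun ((LinearMap.mem_ker).1 hv) ⟨w, hw⟩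
    simpa [pairMap] using this
  · intro h
    rw [LinearMap.mem_ker]
    ext ⟨w, hw⟩
    simpa [pairMap] using h w hw

lemma dual_pair_bound (V W : Submodule k (ι → k))
    (h : ∀ w ∈ W, (∀ v ∈ V, ∑ i, w i * v i = 0) → w = 0) :
    finrank k ↥(V ⊓ LinearMap.ker (pairMap W)) + finrank k W = finrank k V := by
  classical
  set φ : V →ₗ[k] Module.Dual k W := (pairMap W).comp V.subtype with hφ
  have hrn : finrank k (LinearMap.range φ) + finrank k (LinearMap.ker φ) = finrank k V :=
    LinearMap.finrank_range_add_finrank_ker φ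
  have hker : finrank k (LinearMap.ker φ) = finrank k ↥(V ⊓ LinearMap.ker (pairMap W)) := by
    have h1 : LinearMap.ker φ = Submodule.comap V.subtype (LinearMap.ker (pairMap W)) := by
      rw [hφ, LinearMap.ker_comp]
    rw [← Submodule.finrank_map_subtype_eq V (LinearMap.ker φ), h1,
      Submodule.map_comap_subtype]
  have hrange : finrank k (LinearMap.range φ) = finrank k W := by
    have hco : (LinearMap.range φ).dualCoannihilator = ⊥ := by
      rw [Submodule.eq_bot_iff]
      rintro ⟨w, hw⟩ hmem
      rw [Submodule.mem_dualCoannihilator] at hmem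
      have : w = 0 := by
        refine h w hw fun v hv => ?_
        have := hmem (φ ⟨v, hv⟩) ⟨⟨v, hv⟩, rfl⟩
        simpa [φ, pairMap] using this
      exact Subtype.ext this
    have := Subspace.finrank_add_finrank_dualCoannihilator_eq (LinearMap.range φ)
    rw [hco] at this
    simpa using this
  rw [hker, hrange] at hrn
  omega

end DualPair

/-! ### The block submodule and the main induction -/

section Main

variable {k : Type*} [Field k] {N : ℕ}

/-- The block predicate: rows in `[l, l+t)`, columns in `[l+t, r]`. -/
def BlkP (l t r : ℕ) (i j : Fin N) : Prop :=
  l ≤ (i : ℕ) ∧ (i : ℕ) < l + t ∧ l + t ≤ (j : ℕ) ∧ (j : ℕ) ≤ r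

/-- The block submodule. -/
def BlkSub (k : Type*) [Field k] (N l t r : ℕ) : Submodule k (Matrix (Fin N) (Fin N) k) :=
  matSub k (BlkP l t r)

lemma finrank_BlkSub {l t r : ℕ} (hr : r < N) (ht : r + 1 = l + 2 * t) :
    finrank k (BlkSub k N l t r) = t ^ 2 := by
  classical
  set e : Fin t × Fin t → Fin N × Fin N :=
    fun c => (⟨l + c.1, by omega⟩, ⟨l + t + c.2, by omega⟩) with he
  have hinj : Function.Injective e := by
    intro c c' hc
    have h1 : ((e c).1 : ℕ) = ((e c').1 : ℕ) := by rw [hc]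
    have h2 : ((e c).2 : ℕ) = ((e c').2 : ℕ) := by rw [hc]
    simp only [he] at h1 h2
    ext
    · omega
    · omega
  have hPiff : ∀ i j : Fin N, BlkP l t r i j ↔ ∃ c, e c = (i, j) := by
    intro i j
    constructor
    · rintro ⟨h1, h2, h3, h4⟩
      refine ⟨(⟨(i : ℕ) - l, by omega⟩, ⟨(j : ℕ) - (l + t), by omega⟩), ?_⟩
      rw [Prod.ext_iff]
      constructor <;> (rw [Fin.ext_iff]; simp only [he]; omega)
    · rintro ⟨c, hc⟩
      have h1 : ((e c).1 : ℕ) = (i : ℕ) := by rw [hc]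
      have h2 : ((e c).2 : ℕ) = (j : ℕ) := by rw [hc]
      simp only [he] at h1 h2
      have hc1 := c.1.isLt
      have hc2 := c.2.isLt
      exact ⟨by omega, by omega, by omega, by omega⟩
  have hcard := finrank_matSub (k := k) (BlkP (N := N) l t r) e hinj hPiff
  rw [BlkSub, hcard]
  simp [sq]

/-- Commuting with an elementary matrix kills the corresponding column and row. -/
lemma comm_stdBasis_entries {X : Matrix (Fin N) (Fin N) k} {α β : Fin N}
    (h : X * Matrix.single α β (1 : k) = Matrix.single α β (1 : k) * X) :
    (∀ i : Fin N, i ≠ α → X i α = 0) ∧ (∀ j : Fin N, j ≠ β → X β j = 0) := by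
  classical
  have lhs : ∀ i j : Fin N, (X * Matrix.single α β (1 : k)) i j = if j = β then X i α else 0 := by
    intro i j
    have h0 : ∀ c ∈ Finset.univ, c ≠ α → X i c * Matrix.single α β (1 : k) c j = 0 := by
      intro c _ hc
      simp [Matrix.single, Ne.symm hc]
    have h1 : α ∉ (Finset.univ : Finset (Fin N)) → X i α * Matrix.single α β (1 : k) α j = 0 :=
      fun hc => absurd (Finset.mem_univ α) hc
    rw [Matrix.mul_apply, Finset.sum_eq_single α h0 h1]
    by_cases hj : j = β
    · subst hj; simp [Matrix.single]
    · simp only [Matrix.single, Matrix.of_apply, hj, if_false]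
      rw [if_neg (fun hh : True ∧ β = j => hj hh.2.symm)]
      exact mul_zero _
  have rhs : ∀ i j : Fin N, (Matrix.single α β (1 : k) * X) i j = if i = α then X β j else 0 := by
    intro i j
    have h0 : ∀ c ∈ Finset.univ, c ≠ β → Matrix.single α β (1 : k) i c * X c j = 0 := by
      intro c _ hc
      simp [Matrix.single, Ne.symm hc]
    have h1 : β ∉ (Finset.univ : Finset (Fin N)) → Matrix.single α β (1 : k) i β * X β j = 0 :=
      fun hc => absurd (Finset.mem_univ β) hc
    rw [Matrix.mul_apply, Finset.sum_eq_single β h0 h1]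
    by_cases hi : i = α
    · subst hi; simp [Matrix.single]
    · simp only [Matrix.single, Matrix.of_apply, hi, if_false]
      rw [if_neg (fun hh : α = i ∧ True => hi hh.1.symm)]
      exact zero_mul _
  constructor
  · intro i hi
    have hij := congrFun (congrFun h i) β
    rw [lhs i β, rhs i β] at hij
    simpa [hi] using hij
  · intro j hj
    have hij := congrFun (congrFun h α) j
    rw [lhs α j, rhs α j] at hij
    simpa [hj] using hij.symm

/-- The linear map extracting the (trimmed) `l`-th row and the `r`-th column. -/
def rowColMap (k : Type*) [Field k] {N : ℕ} (l r : ℕ) (hl : l < N) (hr : r < N) :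
    Matrix (Fin N) (Fin N) k →ₗ[k] ((Fin N → k) × (Fin N → k)) where
  toFun X := (fun j => if (j : ℕ) < r then X ⟨l, hl⟩ j else 0, fun i => X i ⟨r, hr⟩)
  map_add' X Y := by
    refine Prod.ext ?_ ?_ <;> funext x
    · by_cases hx : (x : ℕ) < r <;> simp [hx, Matrix.add_apply]
    · simp [Matrix.add_apply]
  map_smul' c X := by
    refine Prod.ext ?_ ?_ <;> funext x
    · by_cases hx : (x : ℕ) < r <;> simp [hx, Matrix.smul_apply]
    · simp [Matrix.smul_apply]

lemma rowColMap_fst {hl : l < N} {hr : r < N} (X : Matrix (Fin N) (Fin N) k) (j : Fin N) :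
    (rowColMap k l r hl hr X).1 j = if (j : ℕ) < r then X ⟨l, hl⟩ j else 0 := rfl

lemma rowColMap_snd {hl : l < N} {hr : r < N} (X : Matrix (Fin N) (Fin N) k) (i : Fin N) :
    (rowColMap k l r hl hr X).2 i = X i ⟨r, hr⟩ := rfl

/-- Main induction: a commuting subspace supported strictly above the diagonal in the
window `[l, r]` with `r + 1 = l + 2t` has dimension at most `t²`, with equality only
for the block. -/
theorem main_induction (t : ℕ) : ∀ l r : ℕ, r < N → r + 1 = l + 2 * t →
    ∀ a : Submodule k (Matrix (Fin N) (Fin N) k),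
    (∀ X ∈ a, ∀ i j : Fin N, X i j ≠ 0 → l ≤ (i : ℕ) ∧ (i : ℕ) < (j : ℕ) ∧ (j : ℕ) ≤ r) →
    (∀ X ∈ a, ∀ Y ∈ a, X * Y = Y * X) →
    finrank k ↥a ≤ t ^ 2 ∧ (finrank k ↥a = t ^ 2 → a ≤ BlkSub k N l t r) := by
  classical
  induction t with
  | zero =>
    intro l r hr hlen a hUT hC
    have hbot : a = ⊥ := by
      rw [Submodule.eq_bot_iff]
      intro X hX
      ext i j
      by_contra hne
      have := hUT X hX i j hne
      omega
    constructor
    · rw [hbot]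
      simp [finrank_bot]
    · intro _
      rw [hbot]
      exact bot_le
  | succ t ih =>
    intro l r hr hlen a hUT hC
    have hlN : l < N := by omega
    set lf : Fin N := ⟨l, hlN⟩ with hlf
    set rf : Fin N := ⟨r, hr⟩ with hrf
    have hlfv : (lf : ℕ) = l := rfl
    have hrfv : (rf : ℕ) = r := rfl
    set ρ := rowColMap k l r hlN hr with hρ
    set b : Submodule k (Matrix (Fin N) (Fin N) k) := a ⊓ LinearMap.ker ρ with hb
    -- elements of `b` live in the inner window
    have hbUT : ∀ X ∈ b, ∀ i j : Fin N, X i j ≠ 0 →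
        l + 1 ≤ (i : ℕ) ∧ (i : ℕ) < (j : ℕ) ∧ (j : ℕ) ≤ r - 1 := by
      intro X hX i j hne
      obtain ⟨hXa, hXk⟩ := hX
      have h3 := hUT X hXa i j hne
      have hker : ρ X = 0 := LinearMap.mem_ker.1 hXk
      have hrow : ∀ jj : Fin N, (jj : ℕ) < r → X lf jj = 0 := by
        intro jj hjj
        have h4 := congrFun (congrArg Prod.fst hker) jj
        rw [rowColMap_fst, if_pos hjj] at h4
        exact h4
      have hcol : ∀ ii : Fin N, X ii rf = 0 := by
        intro ii
        have h4 := congrFun (congrArg Prod.snd hker) ii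
        rw [rowColMap_snd] at h4
        exact h4
      have hil : l + 1 ≤ (i : ℕ) := by
        rcases Nat.lt_or_ge l (i : ℕ) with hcase | hcase
        · omega
        · exfalso
          have hi : i = lf := Fin.ext (by omega)
          rcases Nat.lt_or_ge (j : ℕ) r with hj | hj
          · exact hne (hi ▸ hrow j hj)
          · have hj' : j = rf := Fin.ext (by omega)
            rw [hi, hj'] at hne
            exact hne (hcol lf)
      have hjr : (j : ℕ) ≤ r - 1 := by
        rcases Nat.lt_or_ge (j : ℕ) r with hj | hj
        · omega
        · exfalso
          have hj' : j = rf := Fin.ext (by omega)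
          rw [hj'] at hne
          exact hne (hcol i)
      exact ⟨hil, h3.2.1, hjr⟩
    have hbC : ∀ X ∈ b, ∀ Y ∈ b, X * Y = Y * X := fun X hX Y hY => hC X hX.1 Y hY.1
    obtain ⟨hble, hbeqc⟩ := ih (l + 1) (r - 1) (by omega) (by omega) b hbUT hbC
    -- rank–nullity for ρ restricted to a
    set ψ : ↥a →ₗ[k] ((Fin N → k) × (Fin N → k)) := ρ.comp a.subtype with hψ
    have h1 : finrank k ↥(LinearMap.range ψ) + finrank k ↥(LinearMap.ker ψ) = finrank k ↥a :=
      LinearMap.finrank_range_add_finrank_ker ψ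
    have hkerb : finrank k ↥(LinearMap.ker ψ) = finrank k ↥b := by
      have h2 : LinearMap.ker ψ = Submodule.comap a.subtype (LinearMap.ker ρ) := by
        rw [hψ, LinearMap.ker_comp]
      rw [← Submodule.finrank_map_subtype_eq a (LinearMap.ker ψ), h2,
        Submodule.map_comap_subtype]
    have hrange : LinearMap.range ψ = a.map ρ := by
      rw [hψ, LinearMap.range_comp, Submodule.range_subtype]
    set L : Submodule k ((Fin N → k) × (Fin N → k)) := a.map ρ with hL
    -- the coordinate space for the dual pairing
    set V : Submodule k (Fin N → k) :=
      coordSub k (fun i : Fin N => l ≤ (i : ℕ) ∧ (i : ℕ) < r) with hV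
    have hVrank : finrank k ↥V = 2 * t + 1 := by
      have hcard := finrank_coordSub (k := k) (fun i : Fin N => l ≤ (i : ℕ) ∧ (i : ℕ) < r)
        (fun c : Fin (2 * t + 1) => (⟨l + (c : ℕ), by omega⟩ : Fin N))
        (by
          intro c c' hc
          have : l + (c : ℕ) = l + (c' : ℕ) := by
            have := congrArg (fun x : Fin N => (x : ℕ)) hc
            simpa using this
          ext
          omega)
        (by
          intro i
          constructor
          · rintro ⟨h1', h2'⟩
            refine ⟨⟨(i : ℕ) - l, by omega⟩, ?_⟩
            ext
            simp
            omega
          · rintro ⟨c, hc⟩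
            have : (i : ℕ) = l + (c : ℕ) := by
              have := congrArg (fun x : Fin N => (x : ℕ)) hc
              simpa using this.symm
            have := c.isLt
            omega)
      rw [hV, hcard, Fintype.card_fin]
    set W : Submodule k (Fin N → k) := L.map (LinearMap.fst k (Fin N → k) (Fin N → k)) with hW
    -- support of elements of `W`
    have hWsupp : ∀ w ∈ W, ∀ x : Fin N, w x ≠ 0 → l < (x : ℕ) ∧ (x : ℕ) < r := by
      intro w hw x hx
      obtain ⟨z, hzL, rfl⟩ := Submodule.mem_map.1 hw
      obtain ⟨X, hXa, rfl⟩ := Submodule.mem_map.1 hzL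
      have hx' : (if (x : ℕ) < r then X lf x else 0) ≠ 0 := hx
      by_cases hxr : (x : ℕ) < r
      · rw [if_pos hxr] at hx'
        have := hUT X hXa lf x hx'
        exact ⟨this.2.1, hxr⟩
      · rw [if_neg hxr] at hx'
        exact absurd rfl hx'
    -- nondegeneracy hypothesis for the dual pairing
    have hnondeg : ∀ w ∈ W, (∀ v ∈ V, ∑ i, w i * v i = 0) → w = 0 := by
      intro w hw hperp
      funext x
      by_cases hx : l ≤ (x : ℕ) ∧ (x : ℕ) < r
      · have hsingle : (Pi.single x 1 : Fin N → k) ∈ V := by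
          intro i hi
          by_cases hix : i = x
          · exact absurd (hix ▸ hx) hi
          · exact Pi.single_eq_of_ne hix 1
        have hsum := hperp _ hsingle
        have h0 : ∀ c ∈ Finset.univ, c ≠ x → w c * (Pi.single x 1 : Fin N → k) c = 0 := by
          intro c _ hc
          rw [Pi.single_eq_of_ne hc, mul_zero]
        have h1' : x ∉ (Finset.univ : Finset (Fin N)) →
            w x * (Pi.single x 1 : Fin N → k) x = 0 :=
          fun hc => absurd (Finset.mem_univ x) hc
        rw [Finset.sum_eq_single x h0 h1', Pi.single_eq_same, mul_one] at hsum
        exact hsum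
      · by_contra hne
        have := hWsupp w hw x hne
        omega
    -- bounding `finrank L`
    set χ : ↥L →ₗ[k] (Fin N → k) :=
      (LinearMap.fst k (Fin N → k) (Fin N → k)).comp L.subtype with hχ
    have h2 : finrank k ↥(LinearMap.range χ) + finrank k ↥(LinearMap.ker χ) = finrank k ↥L :=
      LinearMap.finrank_range_add_finrank_ker χ
    have hχrange : LinearMap.range χ = W := by
      rw [hχ, LinearMap.range_comp, Submodule.range_subtype]
    set K : Submodule k ((Fin N → k) × (Fin N → k)) :=
      L ⊓ LinearMap.ker (LinearMap.fst k (Fin N → k) (Fin N → k)) with hK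
    have hkerK : finrank k ↥(LinearMap.ker χ) = finrank k ↥K := by
      have h3 : LinearMap.ker χ = Submodule.comap L.subtype
          (LinearMap.ker (LinearMap.fst k (Fin N → k) (Fin N → k))) := by
        rw [hχ, LinearMap.ker_comp]
      rw [← Submodule.finrank_map_subtype_eq L (LinearMap.ker χ), h3,
        Submodule.map_comap_subtype]
    -- the second components of `K` inject into `V ⊓ ker (pairMap W)`
    set θ : ↥K →ₗ[k] (Fin N → k) :=
      (LinearMap.snd k (Fin N → k) (Fin N → k)).comp K.subtype with hθ
    have hθker : LinearMap.ker θ = ⊥ := by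
      rw [Submodule.eq_bot_iff]
      rintro ⟨⟨z1, z2⟩, hz⟩ hzk
      have hsnd : z2 = 0 := hzk
      have hfst : z1 = 0 := hz.2
      exact Subtype.ext (by simp [hfst, hsnd])
    have hθrange : LinearMap.range θ ≤ V ⊓ LinearMap.ker (pairMap W) := by
      rintro _ ⟨⟨z, hzK⟩, rfl⟩
      obtain ⟨hzL, hzker⟩ := hzK
      obtain ⟨X, hXa, hXz⟩ := Submodule.mem_map.1 hzL
      have hz1 : z.1 = 0 := hzker
      have hXrow : ∀ jj : Fin N, (jj : ℕ) < r → X lf jj = 0 := by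
        intro jj hjj
        have h4 : (ρ X).1 jj = 0 := by rw [hXz, hz1]; rfl
        rw [hρ, rowColMap_fst, if_pos hjj] at h4
        exact h4
      have hval : θ ⟨z, ⟨hzL, hzker⟩⟩ = fun i => X i rf := by
        have h5 : θ ⟨z, ⟨hzL, hzker⟩⟩ = z.2 := rfl
        rw [h5, ← hXz]
        rfl
      rw [hval]
      refine Submodule.mem_inf.2 ⟨?_, ?_⟩
      · -- membership in V
        intro i hi
        show X i rf = 0
        by_contra hne0
        have := hUT X hXa i rf hne0
        exact hi ⟨this.1, by omega⟩
      · -- membership in ker (pairMap W)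
        rw [mem_ker_pairMap]
        intro w hw
        obtain ⟨z', hz'L, rfl⟩ := Submodule.mem_map.1 hw
        obtain ⟨Y, hYa, hYz'⟩ := Submodule.mem_map.1 hz'L
        have hterm : ∀ x : Fin N, z'.1 x * X x rf = Y lf x * X x rf := by
          intro x
          rw [← hYz', rowColMap_fst]
          by_cases hxr : (x : ℕ) < r
          · rw [if_pos hxr]
          · rw [if_neg hxr, zero_mul]
            rcases Nat.lt_or_ge r (x : ℕ) with hxx | hxx
            · by_cases hY0 : Y lf x = 0
              · rw [hY0, zero_mul]
              · have := hUT Y hYa lf x hY0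
                omega
            · have hxr' : x = rf := Fin.ext (by omega)
              by_cases hX0 : X x rf = 0
              · rw [hX0, mul_zero]
              · have := hUT X hXa x rf hX0
                rw [hxr'] at this
                omega
        calc (∑ x, z'.1 x * X x rf) = ∑ x, Y lf x * X x rf := by
              exact Finset.sum_congr rfl fun x _ => hterm x
          _ = (Y * X) lf rf := by rw [Matrix.mul_apply]
          _ = (X * Y) lf rf := by rw [hC Y hYa X hXa]
          _ = ∑ x, X lf x * Y x rf := by rw [Matrix.mul_apply]
          _ = 0 := by
              refine Finset.sum_eq_zero fun x _ => ?_
              rcases Nat.lt_or_ge (x : ℕ) r with hxr | hxr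
              · rw [hXrow x hxr, zero_mul]
              · rcases Nat.lt_or_ge r (x : ℕ) with hxx | hxx
                · by_cases hX0 : X lf x = 0
                  · rw [hX0, zero_mul]
                  · have := hUT X hXa lf x hX0
                    omega
                · have hxr' : x = rf := Fin.ext (by omega)
                  by_cases hY0 : Y x rf = 0
                  · rw [hY0, mul_zero]
                  · have := hUT Y hYa x rf hY0
                    rw [hxr'] at this
                    omega
    have hKrank : finrank k ↥K ≤ finrank k ↥(V ⊓ LinearMap.ker (pairMap W)) := by
      have h3 : finrank k ↥(LinearMap.range θ) + finrank k ↥(LinearMap.ker θ)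
          = finrank k ↥K := LinearMap.finrank_range_add_finrank_ker θ
      rw [hθker] at h3
      simp only [finrank_bot, add_zero] at h3
      rw [← h3]
      exact Submodule.finrank_mono hθrange
    have hdual : finrank k ↥(V ⊓ LinearMap.ker (pairMap W)) + finrank k ↥W = finrank k ↥V :=
      dual_pair_bound V W hnondeg
    have hLbound : finrank k ↥L ≤ 2 * t + 1 := by
      rw [← h2, hχrange, hkerK]
      omega
    have hdim : finrank k ↥a = finrank k ↥L + finrank k ↥b := by
      rw [← h1, hkerb, hrange]
    have hpow : (t + 1) ^ 2 = t ^ 2 + 2 * t + 1 := by ring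
    constructor
    · omega
    · -- equality case
      intro hEq
      have hbrank : finrank k ↥b = t ^ 2 := by omega
      have hbsub := hbeqc hbrank
      have hbfull : b = BlkSub k N (l + 1) t (r - 1) := by
        refine Submodule.eq_of_le_of_finrank_le hbsub ?_
        rw [finrank_BlkSub (by omega : r - 1 < N) (by omega : (r - 1) + 1 = (l + 1) + 2 * t)]
        omega
      intro X hX
      show ∀ i j : Fin N, ¬ BlkP l (t + 1) r i j → X i j = 0
      intro i j hP'
      by_contra hne
      have hBnd := hUT X hX i j hne
      by_cases ht0 : t = 0
      · subst ht0
        apply hP'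
        refine ⟨hBnd.1, by omega, by omega, hBnd.2.2⟩
      · have ht1 : 1 ≤ t := by omega
        have hE : ∀ (αf βf : Fin N), l + 1 ≤ (αf : ℕ) → (αf : ℕ) ≤ l + t →
            l + t + 1 ≤ (βf : ℕ) → (βf : ℕ) ≤ r - 1 →
            Matrix.single αf βf (1 : k) ∈ a := by
          intro αf βf hα1 hα2 hβ1 hβ2
          have hmem : Matrix.single αf βf (1 : k) ∈ BlkSub k N (l + 1) t (r - 1) := by
            rw [BlkSub, mem_matSub]
            intro i' j' hp
            rcases em (αf = i' ∧ βf = j') with hyes | hno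
            · exfalso
              apply hp
              obtain ⟨hy1, hy2⟩ := hyes
              have hv1 : (i' : ℕ) = (αf : ℕ) := by rw [← hy1]
              have hv2 : (j' : ℕ) = (βf : ℕ) := by rw [← hy2]
              exact ⟨by omega, by omega, by omega, by omega⟩
            · exact Matrix.single_apply_of_ne _ _ _ _ _ hno
          rw [← hbfull] at hmem
          exact hmem.1
        apply hP'
        refine ⟨hBnd.1, ?_, ?_, hBnd.2.2⟩
        · -- i < l + (t+1)
          by_contra hcon
          have hi1 : l + t + 1 ≤ (i : ℕ) := by omega
          have hi2 : (i : ℕ) ≤ r - 1 := by omega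
          have hEm := hE (⟨l + 1, by omega⟩ : Fin N) i (by simp) (by simp; omega) hi1 hi2
          have hcomm := hC X hX _ hEm
          have hrowv := (comm_stdBasis_entries hcomm).2
          apply hne
          apply hrowv
          intro hji
          have : (j : ℕ) = (i : ℕ) := by rw [hji]
          omega
        · -- l + (t+1) ≤ j
          by_contra hcon
          have hj1 : l + 1 ≤ (j : ℕ) := by omega
          have hj2 : (j : ℕ) ≤ l + t := by omega
          have hEm := hE j (⟨l + t + 1, by omega⟩ : Fin N) hj1 hj2 (by simp) (by simp; omega)
          have hcomm := hC X hX _ hEm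
          have hcolv := (comm_stdBasis_entries hcomm).1
          apply hne
          apply hcolv
          intro hij
          have : (i : ℕ) = (j : ℕ) := by rw [hij]
          omega

end Main

attribute [local instance 100] LieRing.ofAssociativeRing

/-- The set `u_{m,m}` of block matrices `[[0, A],[0, 0]]` inside `2m × 2m` matrices. -/
def blockSet (k : Type*) [Field k] (m : ℕ) : Set (Matrix (Fin (2 * m)) (Fin (2 * m)) k) :=
  {X | ∀ i j : Fin (2 * m), ¬((i : ℕ) < m ∧ m ≤ (j : ℕ)) → X i j = 0}

section Glue

variable {k : Type*} [Field k]

lemma blk_mul_zero {m : ℕ} {X Y : Matrix (Fin (2 * m)) (Fin (2 * m)) k}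
    (hX : X ∈ BlkSub k (2 * m) 0 m (2 * m - 1))
    (hY : Y ∈ BlkSub k (2 * m) 0 m (2 * m - 1)) : X * Y = 0 := by
  ext i j
  rw [Matrix.mul_apply]
  refine Finset.sum_eq_zero fun c _ => ?_
  by_cases hc : (c : ℕ) < m
  · have hX0 : X i c = 0 := by
      refine (mem_matSub.1 hX) i c ?_
      intro hp
      obtain ⟨_, _, h3, _⟩ := hp
      omega
    rw [hX0, zero_mul]
  · have hY0 : Y c j = 0 := by
      refine (mem_matSub.1 hY) c j ?_
      intro hp
      obtain ⟨_, h2, _, _⟩ := hp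
      omega
    rw [hY0, mul_zero]

lemma blk_coe_eq (m : ℕ) (hm : 1 ≤ m) :
    ((BlkSub k (2 * m) 0 m (2 * m - 1) : Submodule k (Matrix (Fin (2 * m)) (Fin (2 * m)) k)) :
      Set (Matrix (Fin (2 * m)) (Fin (2 * m)) k)) = blockSet k m := by
  ext X
  constructor
  · intro hX i j hij
    refine (mem_matSub.1 hX) i j ?_
    intro hp
    obtain ⟨_, h2, h3, _⟩ := hp
    exact hij ⟨by omega, by omega⟩
  · intro hX
    refine (mem_matSub (k := k)).2 fun i j hp => ?_
    refine hX i j ?_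
    intro hij
    apply hp
    have := j.isLt
    exact ⟨by omega, by omega, by omega, by omega⟩

end Glue

/-- `u_{m,m}` is an elementary subalgebra of `sl_{2m}(k)` of dimension `m²`,
and every elementary subalgebra of `sl_{2m}(k)` of dimension `m²` consisting of strictly
upper triangular matrices equals `u_{m,m}`. -/
theorem stmt_3 {k : Type*} [Field k] [IsAlgClosed k] {p : ℕ} [Fact p.Prime] [CharP k p]
    (hp : 2 < p) (m : ℕ) (hm : 1 ≤ m) :
    (∃ ε : LieSubalgebra k (Matrix (Fin (2 * m)) (Fin (2 * m)) k),
       (ε : Set (Matrix (Fin (2 * m)) (Fin (2 * m)) k)) = blockSet k m ∧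
       ε ≤ LieAlgebra.SpecialLinear.sl (Fin (2 * m)) k ∧
       (∀ x ∈ ε, ∀ y ∈ ε, ⁅x, y⁆ = 0) ∧
       (∀ x ∈ ε, x ^ p = 0) ∧
       Module.finrank k ε = m ^ 2)
    ∧
    (∀ ε : LieSubalgebra k (Matrix (Fin (2 * m)) (Fin (2 * m)) k),
       ε ≤ LieAlgebra.SpecialLinear.sl (Fin (2 * m)) k →
       (∀ x ∈ ε, ∀ y ∈ ε, ⁅x, y⁆ = 0) →
       (∀ x ∈ ε, x ^ p = 0) →
       (∀ x ∈ ε, ∀ i j : Fin (2 * m), (j : ℕ) ≤ (i : ℕ) → x i j = 0) →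
       Module.finrank k ε = m ^ 2 →
       (ε : Set (Matrix (Fin (2 * m)) (Fin (2 * m)) k)) = blockSet k m) := by
  classical
  have hp2 : 2 ≤ p := by omega
  set B : Submodule k (Matrix (Fin (2 * m)) (Fin (2 * m)) k) :=
    BlkSub k (2 * m) 0 m (2 * m - 1) with hB
  have hBfin : finrank k ↥B = m ^ 2 :=
    finrank_BlkSub (by omega) (by omega)
  constructor
  · -- existence
    refine ⟨{ toSubmodule := B
              lie_mem' := ?_ }, ?_, ?_, ?_, ?_, ?_⟩
    · intro x y hx hy
      have hxy : x * y = 0 := blk_mul_zero hx hy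
      have hyx : y * x = 0 := blk_mul_zero hy hx
      have : ⁅x, y⁆ = (0 : Matrix (Fin (2 * m)) (Fin (2 * m)) k) := by
        rw [Ring.lie_def, hxy, hyx, sub_zero]
      show ⁅x, y⁆ ∈ B
      rw [this]
      exact B.zero_mem
    · exact blk_coe_eq m hm
    · -- contained in sl
      intro x hx
      have hx' : x ∈ B := hx
      have htr : Matrix.trace x = 0 := by
        rw [Matrix.trace]
        refine Finset.sum_eq_zero fun i _ => ?_
        show x i i = 0
        refine (mem_matSub.1 hx') i i ?_
        intro hpp
        obtain ⟨_, h2, h3, _⟩ := hpp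
        omega
      show x ∈ LinearMap.ker (Matrix.traceLinearMap (Fin (2 * m)) k k)
      rw [LinearMap.mem_ker, Matrix.traceLinearMap_apply]
      exact htr
    · -- abelian
      intro x hx y hy
      have hxy : x * y = 0 := blk_mul_zero hx hy
      have hyx : y * x = 0 := blk_mul_zero hy hx
      rw [Ring.lie_def, hxy, hyx, sub_zero]
    · -- p-th powers vanish
      intro x hx
      have hsq : x ^ 2 = 0 := by
        rw [sq]
        exact blk_mul_zero hx hx
      calc x ^ p = x ^ (p - 2) * x ^ 2 := by
            rw [← pow_add]
            congr 1
            omega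
        _ = 0 := by rw [hsq, mul_zero]
    · -- dimension
      exact hBfin
  · -- uniqueness
    intro ε hsl hcomm hpow hupper hrank
    have hUT : ∀ X ∈ ε.toSubmodule, ∀ i j : Fin (2 * m), X i j ≠ 0 →
        0 ≤ (i : ℕ) ∧ (i : ℕ) < (j : ℕ) ∧ (j : ℕ) ≤ 2 * m - 1 := by
      intro X hX i j hne
      have hXε : X ∈ ε := hX
      refine ⟨Nat.zero_le _, ?_, ?_⟩
      · by_contra hcon
        exact hne (hupper X hXε i j (by omega))
      · have := j.isLt
        omega
    have hC : ∀ X ∈ ε.toSubmodule, ∀ Y ∈ ε.toSubmodule, X * Y = Y * X := by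
      intro X hX Y hY
      have := hcomm X hX Y hY
      rw [Ring.lie_def] at this
      exact sub_eq_zero.1 this
    have hmain := main_induction (k := k) (N := 2 * m) m 0 (2 * m - 1)
      (by omega) (by omega) ε.toSubmodule hUT hC
    have hfinr : finrank k ↥ε.toSubmodule = m ^ 2 := hrank
    have hle : ε.toSubmodule ≤ B := hmain.2 hfinr
    have heq : ε.toSubmodule = B :=
      Submodule.eq_of_le_of_finrank_le hle (by rw [hBfin, hfinr])
    have hsets : (ε : Set (Matrix (Fin (2 * m)) (Fin (2 * m)) k))
        = (B : Set (Matrix (Fin (2 * m)) (Fin (2 * m)) k)) := by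
      rw [← heq]
      rfl
    rw [hsets, hB]
    exact blk_coe_eq m hm
end

section
/- Let k be an algebraically closed field of characteristic p ≠ 2 and let ε be a Lie subalgebra of the symplectic Lie algebra sp_{2m}(k) consisting of pairwise commuting p-nilpotent elements. Then there exists a complete isotropic flag 0 ⊂ V_1 ⊂ ⋯ ⊂ V_m ⊂ V_{m-1}^⊥ ⊂ ⋯ ⊂ V_1^⊥ ⊂ V in the standard symplectic space V = k^{2m} that is invariant under ε; consequently ε is conjugate under Sp_{2m}(k) into the nilpotent radical of the standard Borel subalgebra. -/
open Matrix

attribute [local instance 100] LieRing.ofAssociativeRing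

/-- The matrix of the standard symplectic form, `[[0, I],[-I, 0]]`. -/
def Jstd (k : Type*) [Field k] (m : ℕ) :
    Matrix (Fin m ⊕ Fin m) (Fin m ⊕ Fin m) k :=
  Matrix.fromBlocks 0 1 (-1) 0

/-- The `t`-th member of the standard complete isotropic flag in `k^{2m}`:
for `t ≤ m` it is the span of the first `t` standard basis vectors `x_1, …, x_t`;
for `t = m + s` it is `V_{m-s}^⊥`. -/
def stdFlag (k : Type*) [Field k] (m t : ℕ) : Submodule k ((Fin m ⊕ Fin m) → k) :=
  Submodule.span k
    ((fun i : Fin m => Pi.single (Sum.inl i) (1 : k)) '' {i | (i : ℕ) < t} ∪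
     (fun j : Fin m => Pi.single (Sum.inr j) (1 : k)) '' {j | 2 * m ≤ (j : ℕ) + t})


open Matrix Module Submodule

universe u

section CommKer
variable {k : Type*} [Field k]

lemma nilp_ker {V : Type u} [AddCommGroup V] [Module k V] [Nontrivial V]
    (f : Module.End k V) (hf : IsNilpotent f) : ∃ v : V, v ≠ 0 ∧ f v = 0 := by
  obtain ⟨N, hN⟩ := hf
  induction N with
  | zero =>
    obtain ⟨v, hv⟩ := exists_ne (0 : V)
    have h1 : (f ^ 0) v = 0 := by rw [hN]; rfl
    rw [pow_zero] at h1
    exact absurd h1 (by simpa using hv)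
  | succ N ih =>
    by_cases h : f ^ N = 0
    · exact ih h
    · obtain ⟨w, hw⟩ : ∃ w, (f ^ N) w ≠ 0 := by
        by_contra hc
        push_neg at hc
        exact h (LinearMap.ext fun w => hc w)
      refine ⟨(f ^ N) w, hw, ?_⟩
      have : (f ^ (N + 1)) w = 0 := by rw [hN]; rfl
      rwa [pow_succ', Module.End.mul_apply] at this

theorem commKer (n : ℕ) :
    ∀ (V : Type u) [AddCommGroup V] [Module k V] [FiniteDimensional k V] [Nontrivial V],
      Module.finrank k V ≤ n →
      ∀ S : Set (Module.End k V),
        (∀ f ∈ S, ∀ g ∈ S, f * g = g * f) →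
        (∀ f ∈ S, IsNilpotent f) →
        ∃ v : V, v ≠ 0 ∧ ∀ f ∈ S, f v = 0 := by
  induction n with
  | zero =>
    intro V _ _ _ _ hn S _ _
    have := Module.finrank_pos (R := k) (M := V)
    omega
  | succ n ih =>
    intro V _ _ _ _ hn S hcomm hnil
    classical
    by_cases hz : ∀ f ∈ S, f = 0
    · obtain ⟨v, hv⟩ := exists_ne (0 : V)
      exact ⟨v, hv, fun f hf => by rw [hz f hf]; rfl⟩
    · push_neg at hz
      obtain ⟨f₀, hf₀S, hf₀⟩ := hz
      set K := LinearMap.ker f₀ with hK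
      obtain ⟨w, hw0, hwk⟩ := nilp_ker f₀ (hnil f₀ hf₀S)
      haveI : Nontrivial K := ⟨⟨⟨w, by simpa [hK, LinearMap.mem_ker] using hwk⟩, 0, by
        simp [Subtype.ext_iff, hw0]⟩⟩
      have hKlt : K < ⊤ := lt_top_iff_ne_top.mpr (fun h => hf₀ (LinearMap.ker_eq_top.mp h))
      have hfr : Module.finrank k K ≤ n := by
        have := Submodule.finrank_lt (K := k) (V := V) hKlt.ne
        omega
      have hres : ∀ f ∈ S, ∀ x ∈ K, f x ∈ K := by
        intro f hf x hx
        have hcfx : f₀ (f x) = f (f₀ x) := by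
          have := hcomm f₀ hf₀S f hf
          exact (LinearMap.congr_fun this x : _)
        have hx' : f₀ x = 0 := hx
        show f₀ (f x) = 0
        rw [hcfx, hx', map_zero]
      set S' : Set (Module.End k K) := {F | ∃ g ∈ S, ∀ x : K, (F x : V) = g x} with hS'
      have hcomm' : ∀ F ∈ S', ∀ G ∈ S', F * G = G * F := by
        rintro F ⟨gF, hgF, hF⟩ G ⟨gG, hgG, hG⟩
        ext x
        have h1 : ((F * G) x : V) = gF (gG x) := by
          rw [Module.End.mul_apply, hF, hG]
        have h2 : ((G * F) x : V) = gG (gF x) := by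
          rw [Module.End.mul_apply, hG, hF]
        have h3 : gF (gG (x : V)) = gG (gF (x : V)) :=
          (LinearMap.congr_fun (hcomm gF hgF gG hgG) (x : V) : _)
        exact Subtype.ext_iff.mp (Subtype.ext (h1.trans (h3.trans h2.symm)))
      have hnil' : ∀ F ∈ S', IsNilpotent F := by
        rintro F ⟨g, hgS, hFg⟩
        obtain ⟨N, hN⟩ := hnil g hgS
        have key : ∀ j (x : K), ((F ^ j) x : V) = (g ^ j) (x : V) := by
          intro j
          induction j with
          | zero => intro x; rfl
          | succ j ihj =>
            intro x
            calc ((F ^ (j+1)) x : V) = ((F ^ j) (F x) : V) := by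
                  rw [pow_succ, Module.End.mul_apply]
              _ = (g ^ j) ((F x : V)) := ihj (F x)
              _ = (g ^ j) (g (x : V)) := by rw [hFg]
              _ = (g ^ (j+1)) (x : V) := by rw [pow_succ, Module.End.mul_apply]
        refine ⟨N, ?_⟩
        ext x
        have hkey := key N x
        rw [hN] at hkey
        have h2 : ((F ^ N) x : V) = 0 := by simpa using hkey
        simpa using h2
      obtain ⟨u, hu0, huS⟩ := ih K hfr S' hcomm' hnil'
      refine ⟨(u : V), fun h => hu0 (Subtype.ext h), ?_⟩
      intro f hf
      have hmem : (f.restrict (hres f hf)) ∈ S' := ⟨f, hf, fun x => rfl⟩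
      have h0 := huS _ hmem
      calc f (u : V) = ((f.restrict (hres f hf)) u : V) :=
            (LinearMap.restrict_coe_apply f (hres f hf) u).symm
        _ = ((0 : K) : V) := by rw [h0]
        _ = 0 := rfl
end CommKer

open Matrix Module Submodule


section BB
variable {k : Type*} [Field k] {m : ℕ}

noncomputable def Bb (k : Type*) [Field k] (m : ℕ) :
    ((Fin m ⊕ Fin m) → k) →ₗ[k] ((Fin m ⊕ Fin m) → k) →ₗ[k] k :=
  Matrix.toLinearMap₂' k (Jstd k m)

lemma Bb_apply (u w : (Fin m ⊕ Fin m) → k) :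
    Bb k m u w = u ⬝ᵥ (Jstd k m) *ᵥ w :=
  Matrix.toLinearMap₂'_apply' _ _ _

lemma Jstd_transpose : (Jstd k m)ᵀ = -Jstd k m := by
  rw [Jstd, Matrix.fromBlocks_transpose, Matrix.fromBlocks_neg]
  norm_num

lemma Jstd_mul_Jstd : Jstd k m * Jstd k m = -1 := by
  rw [Jstd, Matrix.fromBlocks_multiply, show (-1 : Matrix (Fin m ⊕ Fin m) (Fin m ⊕ Fin m) k) =
    -(Matrix.fromBlocks 1 0 0 1) by rw [Matrix.fromBlocks_one], Matrix.fromBlocks_neg]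
  norm_num

lemma Jstd_mul_neg_Jstd : Jstd k m * (-Jstd k m) = 1 := by
  rw [Matrix.mul_neg, Jstd_mul_Jstd, neg_neg]

lemma neg_Jstd_mul_Jstd : (-Jstd k m) * Jstd k m = 1 := by
  rw [Matrix.neg_mul, Jstd_mul_Jstd, neg_neg]

lemma Bb_skew (u w : (Fin m ⊕ Fin m) → k) : Bb k m u w = - Bb k m w u := by
  rw [Bb_apply, Bb_apply, Matrix.dotProduct_mulVec]
  have h1 : u ᵥ* Jstd k m = (Jstd k m)ᵀ *ᵥ u := by
    rw [← Matrix.vecMul_transpose, Matrix.transpose_transpose]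
  rw [h1, Jstd_transpose, Matrix.neg_mulVec, neg_dotProduct, dotProduct_comm]

lemma Bb_sp {X : Matrix (Fin m ⊕ Fin m) (Fin m ⊕ Fin m) k}
    (hX : Xᵀ * Jstd k m + Jstd k m * X = 0) (u w : (Fin m ⊕ Fin m) → k) :
    Bb k m (X *ᵥ u) w = - Bb k m u (X *ᵥ w) := by
  have hX' : Xᵀ * Jstd k m = -(Jstd k m * X) := by
    have := neg_eq_of_add_eq_zero_left hX
    rw [← this]
  rw [Bb_apply, Bb_apply]
  have h1 : X *ᵥ u = u ᵥ* Xᵀ := by rw [Matrix.vecMul_transpose]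
  rw [h1, Matrix.dotProduct_mulVec, Matrix.vecMul_vecMul, ← Matrix.dotProduct_mulVec,
    Matrix.mulVec_mulVec, hX', Matrix.neg_mulVec, dotProduct_neg,
    ← Matrix.mulVec_mulVec]

lemma Bb_sp' {X : Matrix (Fin m ⊕ Fin m) (Fin m ⊕ Fin m) k}
    (hX : Xᵀ * Jstd k m + Jstd k m * X = 0) (u w : (Fin m ⊕ Fin m) → k) :
    Bb k m u (X *ᵥ w) = - Bb k m (X *ᵥ u) w := by
  rw [Bb_sp hX, neg_neg]

lemma Bb_alt {p : ℕ} [Fact p.Prime] [CharP k p] (hp : p ≠ 2)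
    (v : (Fin m ⊕ Fin m) → k) : Bb k m v v = 0 := by
  have h := Bb_skew (k := k) (m := m) v v
  have h2 : (2 : k) * Bb k m v v = 0 := by ring_nf; linear_combination h
  have h2ne : (2 : k) ≠ 0 := by
    have hpp : p.Prime := Fact.out
    intro hc
    have hdvd : p ∣ 2 := by
      have := (CharP.cast_eq_zero_iff k p 2).mp (by exact_mod_cast hc)
      exact_mod_cast this
    exact hp ((Nat.prime_dvd_prime_iff_eq hpp Nat.prime_two).mp hdvd)
  exact (mul_eq_zero.mp h2).resolve_left h2ne

lemma Bb_nondeg_right {v : (Fin m ⊕ Fin m) → k}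
    (h : ∀ u, Bb k m u v = 0) : v = 0 := by
  have hJ : Jstd k m *ᵥ v = 0 := by
    ext i
    have := h (Pi.single i 1)
    rw [Bb_apply] at this
    simpa using this
  have : (-Jstd k m) *ᵥ (Jstd k m *ᵥ v) = v := by
    rw [Matrix.mulVec_mulVec, neg_Jstd_mul_Jstd, Matrix.one_mulVec]
  rw [hJ, Matrix.mulVec_zero] at this
  exact this.symm
end BB
section Flag
variable {k : Type*} [Field k] {m : ℕ}

lemma span_image_eq_span_range (e : ℕ → ((Fin m ⊕ Fin m) → k)) (i : ℕ) :
    Submodule.span k (e '' {l | l < i}) =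
      Submodule.span k (Set.range (fun l : Fin i => e (l : ℕ))) := by
  congr 1
  ext x
  constructor
  · rintro ⟨l, hl, rfl⟩; exact ⟨⟨l, hl⟩, rfl⟩
  · rintro ⟨⟨l, hl⟩, rfl⟩; exact ⟨l, hl, rfl⟩

lemma li_of_not_mem_span (e : ℕ → ((Fin m ⊕ Fin m) → k)) (i : ℕ)
    (hind : ∀ j < i, e j ∉ Submodule.span k (e '' {l | l < j})) :
    LinearIndependent k (fun l : Fin i => e (l : ℕ)) := by
  induction i with
  | zero => exact linearIndependent_empty_type
  | succ i ih =>
    have hsnoc : (fun l : Fin (i+1) => e (l : ℕ)) =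
        Fin.snoc (fun l : Fin i => e (l : ℕ)) (e i) := by
      funext l
      refine Fin.lastCases ?_ ?_ l
      · simp
      · intro j; simp
    rw [hsnoc, linearIndependent_fin_snoc]
    refine ⟨ih (fun j hj => hind j (by omega)), ?_⟩
    rw [← span_image_eq_span_range]
    exact hind i (by omega)

lemma finrank_span_flag (e : ℕ → ((Fin m ⊕ Fin m) → k)) (i : ℕ)
    (hind : ∀ j < i, e j ∉ Submodule.span k (e '' {l | l < j})) :
    Module.finrank k (Submodule.span k (e '' {l | l < i})) = i := by
  rw [span_image_eq_span_range, finrank_span_eq_card (li_of_not_mem_span e i hind)]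
  simp

set_option maxHeartbeats 1000000 in
lemma flag_step {p : ℕ} [Fact p.Prime] [CharP k p]
    (𝒮 : Set (Matrix (Fin m ⊕ Fin m) (Fin m ⊕ Fin m) k))
    (hBsp : ∀ X ∈ 𝒮, ∀ u w, Bb k m (X *ᵥ u) w = - Bb k m u (X *ᵥ w))
    (hcommS : ∀ X ∈ 𝒮, ∀ Y ∈ 𝒮, X * Y = Y * X)
    (hnilS : ∀ X ∈ 𝒮, X ^ p = 0)
    (i : ℕ) (him : i < m) (e : ℕ → ((Fin m ⊕ Fin m) → k))
    (hE2 : ∀ a < i, ∀ b < i, Bb k m (e a) (e b) = 0)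
    (hind : ∀ j < i, e j ∉ Submodule.span k (e '' {l | l < j}))
    (hinv : ∀ X ∈ 𝒮, ∀ j < i, X *ᵥ e j ∈ Submodule.span k (e '' {l | l < j})) :
    ∃ v, (∀ a < i, Bb k m (e a) v = 0) ∧ v ∉ Submodule.span k (e '' {l | l < i}) ∧
      ∀ X ∈ 𝒮, X *ᵥ v ∈ Submodule.span k (e '' {l | l < i}) := by
  classical
  set W := Submodule.span k (e '' {l | l < i}) with hW
  set L : ((Fin m ⊕ Fin m) → k) →ₗ[k] (Fin i → k) :=
    LinearMap.pi (fun l : Fin i => Bb k m (e (l : ℕ))) with hL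
  set Worth := LinearMap.ker L with hWo
  have hmemWo : ∀ v, v ∈ Worth ↔ ∀ l : Fin i, Bb k m (e (l : ℕ)) v = 0 := by
    intro v
    rw [hWo, LinearMap.mem_ker, hL]
    simp [LinearMap.pi_apply, funext_iff]
  have horthW : ∀ v ∈ Worth, ∀ w ∈ W, Bb k m w v = 0 := by
    intro v hv
    have hle : W ≤ LinearMap.ker ((Bb k m).flip v) := by
      rw [hW, Submodule.span_le]
      rintro x ⟨a, ha, rfl⟩
      simp only [SetLike.mem_coe, LinearMap.mem_ker, LinearMap.flip_apply]
      exact (hmemWo v).mp hv ⟨a, ha⟩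
    intro w hw
    exact LinearMap.mem_ker.mp (hle hw)
  have hWle : W ≤ Worth := by
    rw [hW, Submodule.span_le]
    rintro x ⟨b, hb, rfl⟩
    exact (hmemWo _).mpr (fun l => hE2 l l.isLt b hb)
  have hspanmono : ∀ a ≤ i, Submodule.span k (e '' {l | l < a}) ≤ W := by
    intro a ha
    rw [hW]
    exact Submodule.span_mono (Set.image_mono (f := e) (fun l hl => lt_of_lt_of_le hl ha))
  have hWinv : ∀ X ∈ 𝒮, ∀ w ∈ W, X *ᵥ w ∈ W := by
    intro X hX
    have hle : W ≤ Submodule.comap (Matrix.mulVecLin X) W := by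
      rw [hW, Submodule.span_le]
      rintro x ⟨a, ha, rfl⟩
      have h1 : X *ᵥ e a ∈ W := hspanmono a (le_of_lt ha) (hinv X hX a ha)
      exact h1
    intro w hw
    exact hle hw
  have hWoinv : ∀ X ∈ 𝒮, ∀ v ∈ Worth, X *ᵥ v ∈ Worth := by
    intro X hX v hv
    refine (hmemWo _).mpr (fun l => ?_)
    have h2 := hBsp X hX (e (l : ℕ)) v
    have h1 : Bb k m (e (l : ℕ)) (X *ᵥ v) = -(Bb k m (X *ᵥ e (l : ℕ)) v) := by
      rw [h2, neg_neg]
    have h3 : X *ᵥ e (l : ℕ) ∈ W :=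
      Submodule.span_mono (Set.image_mono (f := e) (fun l' hl' => lt_trans hl' l.isLt))
        (hinv X hX l l.isLt)
    rw [h1, horthW v hv _ h3, neg_zero]
  have hfinW : Module.finrank k W = i := finrank_span_flag e i hind
  have hQnt : ¬ (Worth ≤ W) := by
    intro hle
    have h1 : Module.finrank k Worth ≤ i := by
      have := Submodule.finrank_mono hle
      omega
    have hrange : Module.finrank k (LinearMap.range L) ≤ i := by
      have h2 := Submodule.finrank_le (LinearMap.range L)
      rwa [Module.finrank_fin_fun] at h2
    have hrn := LinearMap.finrank_range_add_finrank_ker L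
    rw [← hWo] at hrn
    have hfinM : Module.finrank k ((Fin m ⊕ Fin m) → k) = 2 * m := by
      rw [Module.finrank_pi]
      simp [two_mul]
    rw [hfinM] at hrn
    omega
  set Wc := W.comap Worth.subtype with hWc
  have hWclt : Wc < ⊤ := by
    rw [lt_top_iff_ne_top]
    intro hc
    apply hQnt
    intro x hx
    have hmem : (⟨x, hx⟩ : Worth) ∈ Wc := hc ▸ Submodule.mem_top
    exact Submodule.mem_comap.mp hmem
  haveI := Submodule.Quotient.nontrivial_iff.mpr hWclt.ne
  let rest : ∀ X, X ∈ 𝒮 → (Worth →ₗ[k] Worth) := fun X hX =>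
    (Matrix.mulVecLin X).restrict (fun v hv => hWoinv X hX v hv)
  have hrest_le : ∀ X (hX : X ∈ 𝒮), Wc ≤ Wc.comap (rest X hX) := by
    intro X hX v hv
    simp only [hWc, Submodule.mem_comap] at hv ⊢
    exact hWinv X hX _ hv
  let qe : ∀ X, X ∈ 𝒮 → Module.End k (Worth ⧸ Wc) := fun X hX =>
    Submodule.mapQ Wc Wc (rest X hX) (hrest_le X hX)
  have qe_apply : ∀ X (hX : X ∈ 𝒮) (v : Worth),
      qe X hX (Submodule.Quotient.mk v) = Submodule.Quotient.mk (rest X hX v) :=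
    fun X hX v => rfl
  set S : Set (Module.End k (Worth ⧸ Wc)) := {F | ∃ X, ∃ hX : X ∈ 𝒮, F = qe X hX} with hS
  have hScomm : ∀ F ∈ S, ∀ G ∈ S, F * G = G * F := by
    rintro F ⟨X, hX, rfl⟩ G ⟨Y, hY, rfl⟩
    ext v
    have hXY : X * Y = Y * X := hcommS X hX Y hY
    simp only [Module.End.mul_apply, LinearMap.comp_apply, Submodule.mkQ_apply,
      qe_apply X hX, qe_apply Y hY]
    congr 1
    refine Subtype.ext ?_
    show X *ᵥ (Y *ᵥ (v : (Fin m ⊕ Fin m) → k)) = Y *ᵥ (X *ᵥ (v : (Fin m ⊕ Fin m) → k))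
    rw [Matrix.mulVec_mulVec, Matrix.mulVec_mulVec, hXY]
  have hSnil : ∀ F ∈ S, IsNilpotent F := by
    rintro F ⟨X, hX, rfl⟩
    have key : ∀ n (v : Worth), ((qe X hX) ^ n) (Submodule.Quotient.mk v) =
        Submodule.Quotient.mk (((rest X hX) ^ n) v) := by
      intro n
      induction n with
      | zero => intro v; rfl
      | succ n ihn =>
        intro v
        rw [pow_succ, Module.End.mul_apply, qe_apply X hX, ihn, pow_succ, Module.End.mul_apply]
    have key2 : ∀ n (v : Worth),
        (((rest X hX) ^ n) v : (Fin m ⊕ Fin m) → k) = (X ^ n) *ᵥ (v : (Fin m ⊕ Fin m) → k) := by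
      intro n
      induction n with
      | zero => intro v; simp
      | succ n ihn =>
        intro v
        rw [pow_succ, Module.End.mul_apply]
        have : ((rest X hX) v : (Fin m ⊕ Fin m) → k) = X *ᵥ (v : (Fin m ⊕ Fin m) → k) := rfl
        rw [ihn (rest X hX v), this, Matrix.mulVec_mulVec, ← pow_succ]
    refine ⟨p, ?_⟩
    ext v
    simp only [LinearMap.comp_apply, Submodule.mkQ_apply]
    rw [key p v]
    have hz : (((rest X hX) ^ p) v : (Fin m ⊕ Fin m) → k) = 0 := by
      rw [key2, hnilS X hX, Matrix.zero_mulVec]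
    have hz2 : ((rest X hX) ^ p) v = 0 := Subtype.ext hz
    rw [hz2]
    simp
  obtain ⟨q0, hq0, hq0S⟩ :=
    commKer (k := k) (Module.finrank k (Worth ⧸ Wc)) (Worth ⧸ Wc) le_rfl S hScomm hSnil
  obtain ⟨v, rfl⟩ := Submodule.Quotient.mk_surjective _ q0
  refine ⟨(v : (Fin m ⊕ Fin m) → k), ?_, ?_, ?_⟩
  · intro a ha
    exact (hmemWo _).mp v.2 ⟨a, ha⟩
  · intro hc
    apply hq0
    rw [Submodule.Quotient.mk_eq_zero]
    exact Submodule.mem_comap.mpr hc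
  · intro X hX
    have hf := hq0S (qe X hX) ⟨X, hX, rfl⟩
    rw [qe_apply X hX, Submodule.Quotient.mk_eq_zero] at hf
    exact Submodule.mem_comap.mp hf

lemma exists_flag {p : ℕ} [Fact p.Prime] [CharP k p] (hp : p ≠ 2)
    (𝒮 : Set (Matrix (Fin m ⊕ Fin m) (Fin m ⊕ Fin m) k))
    (hBsp : ∀ X ∈ 𝒮, ∀ u w, Bb k m (X *ᵥ u) w = - Bb k m u (X *ᵥ w))
    (hcommS : ∀ X ∈ 𝒮, ∀ Y ∈ 𝒮, X * Y = Y * X)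
    (hnilS : ∀ X ∈ 𝒮, X ^ p = 0) :
    ∃ e : ℕ → ((Fin m ⊕ Fin m) → k),
      (∀ a < m, ∀ b < m, Bb k m (e a) (e b) = 0) ∧
      (∀ j < m, e j ∉ Submodule.span k (e '' {l | l < j})) ∧
      (∀ X ∈ 𝒮, ∀ j < m, X *ᵥ e j ∈ Submodule.span k (e '' {l | l < j})) := by
  suffices h : ∀ i, i ≤ m → ∃ e : ℕ → ((Fin m ⊕ Fin m) → k),
      (∀ a < i, ∀ b < i, Bb k m (e a) (e b) = 0) ∧
      (∀ j < i, e j ∉ Submodule.span k (e '' {l | l < j})) ∧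
      (∀ X ∈ 𝒮, ∀ j < i, X *ᵥ e j ∈ Submodule.span k (e '' {l | l < j})) by
    exact h m le_rfl
  intro i
  induction i with
  | zero =>
    intro _
    exact ⟨fun _ => 0, fun a ha => absurd ha (by omega), fun j hj => absurd hj (by omega),
      fun X hX j hj => absurd hj (by omega)⟩
  | succ i ih =>
    intro hi
    obtain ⟨e, hE2, hind, hinv⟩ := ih (by omega)
    obtain ⟨v, hv1, hv2, hv3⟩ := flag_step 𝒮 hBsp hcommS hnilS i (by omega) e hE2 hind hinv
    classical
    refine ⟨fun j => if j = i then v else e j, ?_, ?_, ?_⟩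
    all_goals
      have hsame : ∀ j, j ≤ i →
          (fun j' => if j' = i then v else e j') '' {l | l < j} = e '' {l | l < j} := by
        intro j hj
        apply Set.image_congr
        intro l hl
        simp only [Set.mem_setOf_eq] at hl
        rw [if_neg (by omega)]
    · intro a ha b hb
      rcases Nat.lt_succ_iff_lt_or_eq.mp ha with ha' | ha' <;>
        rcases Nat.lt_succ_iff_lt_or_eq.mp hb with hb' | hb'
      · simp only [if_neg (by omega : ¬ a = i), if_neg (by omega : ¬ b = i)]
        exact hE2 a ha' b hb'
      · simp only [if_neg (by omega : ¬ a = i), if_pos hb']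
        exact hv1 a ha'
      · simp only [if_pos ha', if_neg (by omega : ¬ b = i)]
        rw [Bb_skew, hv1 b hb', neg_zero]
      · simp only [if_pos ha', if_pos hb']
        exact Bb_alt hp v
    · intro j hj
      rcases Nat.lt_succ_iff_lt_or_eq.mp hj with hj' | hj'
      · rw [hsame j (le_of_lt hj')]
        simp only [if_neg (by omega : ¬ j = i)]
        exact hind j hj'
      · subst hj'
        rw [hsame j le_rfl]
        simp only [if_pos rfl]
        exact hv2
    · intro X hX j hj
      rcases Nat.lt_succ_iff_lt_or_eq.mp hj with hj' | hj'
      · rw [hsame j (le_of_lt hj')]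
        simp only [if_neg (by omega : ¬ j = i)]
        exact hinv X hX j hj'
      · subst hj'
        rw [hsame j le_rfl]
        simp only [if_pos rfl]
        exact hv3 X hX
end Flag

section SympBasis
variable {k : Type*} [Field k] {m : ℕ}

lemma symp_basis {p : ℕ} [Fact p.Prime] [CharP k p] (hp : p ≠ 2)
    (e : ℕ → ((Fin m ⊕ Fin m) → k))
    (hE2 : ∀ a < m, ∀ b < m, Bb k m (e a) (e b) = 0)
    (hind : ∀ j < m, e j ∉ Submodule.span k (e '' {l | l < j})) :
    ∃ f : Fin m → ((Fin m ⊕ Fin m) → k),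
      (∀ i j : Fin m, Bb k m (e (i : ℕ)) (f j) = if i = j then 1 else 0) ∧
      (∀ i j : Fin m, Bb k m (f i) (f j) = 0) := by
  classical
  set E : Fin m → ((Fin m ⊕ Fin m) → k) := fun l => e (l : ℕ) with hEdef
  have hLI : LinearIndependent k E := li_of_not_mem_span e m hind
  have hinjE : Function.Injective E := hLI.injective
  have hEE : ∀ i l : Fin m, Bb k m (E i) (E l) = 0 := fun i l => hE2 i i.isLt l l.isLt
  have hs : LinearIndepOn k id (Set.range E) :=
    (linearIndepOn_id_range_iff hinjE).mpr hLI
  let bE := Module.Basis.extend hs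
  have hmm : ∀ j : Fin m, E j ∈ hs.extend (Set.subset_univ _) :=
    fun j => hs.subset_extend _ ⟨j, rfl⟩
  set ψ : Fin m → Module.Dual k ((Fin m ⊕ Fin m) → k) :=
    fun j => bE.coord ⟨E j, hmm j⟩ with hψdef
  have hψ : ∀ i j : Fin m, ψ j (E i) = if i = j then 1 else 0 := by
    intro i j
    have h1 : E i = bE ⟨E i, hmm i⟩ := (Basis.extend_apply_self hs ⟨E i, hmm i⟩).symm
    rw [hψdef]
    simp only
    rw [Basis.coord_apply, h1, Basis.repr_self_apply]
    congr 1
    simp [Subtype.mk_eq_mk, hinjE.eq_iff]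
  set ρ : ((Fin m ⊕ Fin m) → k) →ₗ[k] Module.Dual k ((Fin m ⊕ Fin m) → k) :=
    (Bb k m).flip with hρdef
  have hρinj : Function.Injective ρ := by
    rw [← LinearMap.ker_eq_bot]
    refine (Submodule.eq_bot_iff _).mpr (fun v hv => ?_)
    refine Bb_nondeg_right (fun u => ?_)
    have : ρ v u = 0 := by rw [LinearMap.mem_ker.mp hv]; rfl
    exact this
  have hρsurj : Function.Surjective ρ :=
    (LinearMap.injective_iff_surjective_of_finrank_eq_finrank
      (by rw [Subspace.dual_finrank_eq])).mp hρinj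
  choose f' hf' using fun j => hρsurj (ψ j)
  have hEf' : ∀ i j : Fin m, Bb k m (E i) (f' j) = if i = j then 1 else 0 := by
    intro i j
    have : Bb k m (E i) (f' j) = ρ (f' j) (E i) := rfl
    rw [this, hf' j, hψ]
  have hf'E : ∀ i l : Fin m, Bb k m (f' i) (E l) = -(if l = i then (1:k) else 0) := by
    intro i l
    rw [Bb_skew, hEf']
  set A : Fin m → Fin m → k := fun i j => Bb k m (f' i) (f' j) with hAdef
  set c : Fin m → Fin m → k := fun l j => if (l : ℕ) < (j : ℕ) then A l j else 0 with hcdef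
  set f : Fin m → ((Fin m ⊕ Fin m) → k) := fun j => f' j + ∑ l, c l j • E l with hfdef
  have hEf : ∀ i j : Fin m, Bb k m (E i) (f j) = if i = j then 1 else 0 := by
    intro i j
    rw [hfdef]
    simp only [map_add, map_sum, _root_.map_smul, smul_eq_mul]
    rw [hEf']
    have hz : ∀ l ∈ Finset.univ, c l j * Bb k m (E i) (E l) = 0 := by
      intro l _
      rw [hEE, mul_zero]
    rw [Finset.sum_congr rfl hz, Finset.sum_const_zero, add_zero]
  have hstep1 : ∀ i j : Fin m, Bb k m (f' i) (f j) = A i j - c i j := by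
    intro i j
    rw [hfdef]
    simp only [map_add, map_sum, _root_.map_smul, smul_eq_mul]
    rw [show Bb k m (f' i) (f' j) = A i j from rfl]
    have hz : ∀ l ∈ Finset.univ, c l j * Bb k m (f' i) (E l) =
        if l = i then -(c i j) else 0 := by
      intro l _
      rw [hf'E]
      by_cases h : l = i
      · subst h; simp
      · simp [h]
    rw [Finset.sum_congr rfl hz, Finset.sum_ite_eq' Finset.univ i (fun _ => -(c i j)),
      if_pos (Finset.mem_univ i)]
    ring
  have hff : ∀ i j : Fin m, Bb k m (f i) (f j) = 0 := by
    intro i j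
    have hexp : Bb k m (f i) (f j) = (A i j - c i j) + c j i := by
      have h1 : Bb k m (f i) (f j)
          = Bb k m (f' i) (f j) + ∑ l, c l i * Bb k m (E l) (f j) := by
        have hsplit : (Bb k m) (f i) = Bb k m (f' i) + Bb k m (∑ l, c l i • E l) := by
          rw [show f i = f' i + ∑ l, c l i • E l from rfl, map_add]
        rw [hsplit, LinearMap.add_apply]
        congr 1
        rw [map_sum, LinearMap.sum_apply]
        refine Finset.sum_congr rfl (fun l _ => ?_)
        rw [_root_.map_smul, LinearMap.smul_apply, smul_eq_mul]
      rw [h1, hstep1]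
      congr 1
      have hz : ∀ l ∈ Finset.univ, c l i * Bb k m (E l) (f j) =
          if l = j then c j i else 0 := by
        intro l _
        rw [hEf]
        by_cases h : l = j
        · subst h; simp
        · simp [h]
      rw [Finset.sum_congr rfl hz, Finset.sum_ite_eq' Finset.univ j (fun _ => c j i),
        if_pos (Finset.mem_univ j)]
    rw [hexp]
    rcases lt_trichotomy ((i : ℕ)) ((j : ℕ)) with h | h | h
    · simp only [hcdef]
      rw [if_pos h, if_neg (by omega)]
      ring
    · have hij : i = j := Fin.ext h
      subst hij
      have hAii : A i i = 0 := Bb_alt hp (f' i)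
      simp only [hcdef]
      rw [if_neg (by omega), hAii]
      ring
    · have hAs : A j i = - A i j := by simp only [hAdef]; rw [← Bb_skew]
      simp only [hcdef]
      rw [if_neg (by omega), if_pos h, hAs]
      ring
  exact ⟨f, fun i j => hEf i j, hff⟩
end SympBasis

set_option maxHeartbeats 2000000 in
/-- any elementary subalgebra `ε` of `sp_{2m}(k)` (pairwise commuting,
`p`-nilpotent) leaves some complete isotropic flag invariant; consequently `ε` is
conjugate under `Sp_{2m}(k)` into the nilpotent radical of the standard Borel
subalgebra (elements moving each member of the standard complete flag into the
previous one). -/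
theorem stmt_6 {k : Type*} [Field k] [IsAlgClosed k] {p : ℕ} [Fact p.Prime] [CharP k p]
    (hp : p ≠ 2) (m : ℕ)
    (ε : LieSubalgebra k (Matrix (Fin m ⊕ Fin m) (Fin m ⊕ Fin m) k))
    (hsp : ∀ X ∈ ε, Xᵀ * Jstd k m + Jstd k m * X = 0)
    (habelian : ∀ X ∈ ε, ∀ Y ∈ ε, ⁅X, Y⁆ = 0)
    (hpnil : ∀ X ∈ ε, X ^ p = 0) :
    -- (a) there is an `ε`-invariant complete isotropic flag:
    (∃ V : ℕ → Submodule k ((Fin m ⊕ Fin m) → k),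
       V 0 = ⊥ ∧
       (∀ i, i ≤ m → Module.finrank k (V i) = i) ∧
       (∀ i, i < m → V i ≤ V (i + 1)) ∧
       (∀ i, i ≤ m → ∀ v ∈ V i, ∀ w ∈ V i, v ⬝ᵥ (Jstd k m).mulVec w = 0) ∧
       (∀ X ∈ ε, ∀ i, i ≤ m → ∀ v ∈ V i, X.mulVec v ∈ V i))
    ∧
    -- (b) consequently `ε` is conjugate under the symplectic group into the
    -- nilpotent radical of the standard Borel:
    (∃ g : Matrix (Fin m ⊕ Fin m) (Fin m ⊕ Fin m) k,
       IsUnit g ∧ gᵀ * Jstd k m * g = Jstd k m ∧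
       ∀ X ∈ ε, ∀ t, 1 ≤ t → t ≤ 2 * m →
         ∀ v ∈ stdFlag k m t, (g * X * g⁻¹).mulVec v ∈ stdFlag k m (t - 1)) := by
  classical
  classical
  set 𝒮 : Set (Matrix (Fin m ⊕ Fin m) (Fin m ⊕ Fin m) k) := {X | X ∈ ε} with h𝒮
  have hBsp : ∀ X ∈ 𝒮, ∀ u w, Bb k m (X *ᵥ u) w = - Bb k m u (X *ᵥ w) :=
    fun X hX => Bb_sp (hsp X hX)
  have hcommS : ∀ X ∈ 𝒮, ∀ Y ∈ 𝒮, X * Y = Y * X := by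
    intro X hX Y hY
    have h1 := habelian X hX Y hY
    rw [Ring.lie_def] at h1
    exact sub_eq_zero.mp h1
  have hnilS : ∀ X ∈ 𝒮, X ^ p = 0 := fun X hX => hpnil X hX
  obtain ⟨e, hE2, hind, hinv⟩ := exists_flag hp 𝒮 hBsp hcommS hnilS
  obtain ⟨f, hEf, hff⟩ := symp_basis hp e hE2 hind
  set E : Fin m → ((Fin m ⊕ Fin m) → k) := fun l => e (l : ℕ) with hEdef
  set Vn : ℕ → Submodule k ((Fin m ⊕ Fin m) → k) :=
    fun j => Submodule.span k (e '' {l | l < j}) with hVn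
  -- part (a)
  have hempty : Vn 0 = ⊥ := by
    have h0 : {l : ℕ | l < 0} = (∅ : Set ℕ) := by ext l; simp
    rw [hVn]
    simp only
    rw [h0, Set.image_empty, Submodule.span_empty]
  have hXVvec : ∀ X ∈ 𝒮, ∀ j ≤ m, ∀ u ∈ Vn j, X *ᵥ u ∈ Vn (j - 1) := by
    intro X hX j hj
    have hle : Vn j ≤ Submodule.comap (Matrix.mulVecLin X) (Vn (j - 1)) := by
      rw [hVn]
      simp only
      rw [Submodule.span_le]
      rintro x ⟨a, ha, rfl⟩
      simp only [Set.mem_setOf_eq] at ha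
      simp only [SetLike.mem_coe, Submodule.mem_comap, Matrix.mulVecLin_apply]
      exact Submodule.span_mono (Set.image_mono (f := e) (fun l hl => by
        simp only [Set.mem_setOf_eq] at hl ⊢; omega)) (hinv X hX a (by omega))
    intro u hu
    exact Submodule.mem_comap.mp (hle hu)
  have parta : (∃ V : ℕ → Submodule k ((Fin m ⊕ Fin m) → k),
       V 0 = ⊥ ∧
       (∀ i, i ≤ m → Module.finrank k (V i) = i) ∧
       (∀ i, i < m → V i ≤ V (i + 1)) ∧
       (∀ i, i ≤ m → ∀ v ∈ V i, ∀ w ∈ V i, v ⬝ᵥ (Jstd k m).mulVec w = 0) ∧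
       (∀ X ∈ ε, ∀ i, i ≤ m → ∀ v ∈ V i, X.mulVec v ∈ V i)) := by
    refine ⟨Vn, hempty, ?_, ?_, ?_, ?_⟩
    · intro i hi
      exact finrank_span_flag e i (fun j hj => hind j (by omega))
    · intro i _
      exact Submodule.span_mono (Set.image_mono (f := e) (fun l hl => by
        simp only [Set.mem_setOf_eq] at hl ⊢; omega))
    · intro i hi v hv w hw
      rw [← Bb_apply]
      have h1 : ∀ a, a < i → Bb k m (e a) w = 0 := by
        intro a ha
        have hle : Vn i ≤ LinearMap.ker (Bb k m (e a)) := by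
          rw [hVn]; simp only; rw [Submodule.span_le]
          rintro x ⟨bx, hb, rfl⟩
          simp only [Set.mem_setOf_eq] at hb
          exact hE2 a (by omega) bx (by omega)
        exact hle hw
      have h2 : Vn i ≤ LinearMap.ker ((Bb k m).flip w) := by
        rw [hVn]; simp only; rw [Submodule.span_le]
        rintro x ⟨a, ha, rfl⟩
        simp only [Set.mem_setOf_eq] at ha
        simp only [SetLike.mem_coe, LinearMap.mem_ker, LinearMap.flip_apply]
        exact h1 a ha
      exact h2 hv
    · intro X hX i hi v hv
      rcases Nat.eq_zero_or_pos i with rfl | hipos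
      · rw [hempty] at hv
        have hv0 : v = 0 := by simpa using hv
        subst hv0
        rw [hempty, Matrix.mulVec_zero]
        exact Submodule.zero_mem _
      · have := hXVvec X hX i hi v hv
        exact Submodule.span_mono (Set.image_mono (f := e) (fun l hl => by
          simp only [Set.mem_setOf_eq] at hl ⊢; omega)) this
  refine ⟨parta, ?_⟩
  -- part (b)
  set b : Fin m ⊕ Fin m → ((Fin m ⊕ Fin m) → k) := Sum.elim E f with hbdef
  have hEE : ∀ i l : Fin m, Bb k m (E i) (E l) = 0 := fun i l => hE2 i i.isLt l l.isLt
  have hGram : ∀ cc dd, Bb k m (b cc) (b dd) = Jstd k m cc dd := by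
    rintro (i | i) (j | j) <;>
      simp only [hbdef, Sum.elim_inl, Sum.elim_inr, Jstd, Matrix.fromBlocks_apply₁₁,
        Matrix.fromBlocks_apply₁₂, Matrix.fromBlocks_apply₂₁, Matrix.fromBlocks_apply₂₂,
        Matrix.zero_apply, Matrix.one_apply, Matrix.neg_apply]
    · exact hEE i j
    · exact hEf i j
    · rw [Bb_skew, hEf j i]
      by_cases h : i = j
      · subst h; simp
      · rw [if_neg h, if_neg (fun hh => h hh.symm), neg_zero]
    · exact hff i j
  set h : Matrix (Fin m ⊕ Fin m) (Fin m ⊕ Fin m) k :=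
    Matrix.of (fun r cc => b cc r) with hhdef
  have hcol : ∀ cc, h *ᵥ Pi.single cc 1 = b cc := by
    intro cc
    rw [Matrix.mulVec_single_one]
    funext r
    rfl
  have hGram' : hᵀ * Jstd k m * h = Jstd k m := by
    ext cc dd
    have hg := hGram cc dd
    rw [Bb_apply] at hg
    rw [← hg, Matrix.mul_assoc]
    simp only [Matrix.mul_apply, Matrix.mulVec, dotProduct, Matrix.transpose_apply,
      hhdef, Matrix.of_apply]
  have hJu : IsUnit (Jstd k m).det :=
    Matrix.isUnit_det_of_right_inverse (Jstd_mul_neg_Jstd)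
  have hdet : IsUnit h.det := by
    have h2 : h.det * (Jstd k m).det * h.det = (Jstd k m).det := by
      have h3 := congrArg Matrix.det hGram'
      rwa [Matrix.det_mul, Matrix.det_mul, Matrix.det_transpose] at h3
    have h3 : (Jstd k m).det * (h.det * h.det) = (Jstd k m).det * 1 := by
      rw [mul_one]; linear_combination h2
    exact IsUnit.of_mul_eq_one _ (hJu.mul_left_cancel h3)
  have hinvh : Invertible h := h.invertibleOfIsUnitDet hdet
  set bB : Basis (Fin m ⊕ Fin m) k ((Fin m ⊕ Fin m) → k) :=
    (Pi.basisFun k (Fin m ⊕ Fin m)).map (Matrix.toLinearEquiv' h hinvh) with hbB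
  have hbBapply : ∀ cc, bB cc = b cc := by
    intro cc
    rw [hbB, Basis.map_apply, Pi.basisFun_apply]
    have h1 : (Matrix.toLinearEquiv' h hinvh) (Pi.single cc 1)
        = Matrix.toLin' h (Pi.single cc 1) := rfl
    rw [h1, Matrix.toLin'_apply, hcol]
  have hrep : ∀ u (l : Fin m), bB.repr u (Sum.inr l) = Bb k m (E l) u := by
    intro u l
    conv_rhs => rw [← bB.sum_repr u]
    rw [map_sum]
    have hterm : ∀ cc ∈ Finset.univ, Bb k m (E l) (bB.repr u cc • bB cc)
        = bB.repr u cc * Jstd k m (Sum.inl l) cc := by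
      intro cc _
      rw [_root_.map_smul, smul_eq_mul, hbBapply]
      congr 1
      exact hGram (Sum.inl l) cc
    rw [Finset.sum_congr rfl hterm, Fintype.sum_sum_type]
    simp only [Jstd, Matrix.fromBlocks_apply₁₁, Matrix.fromBlocks_apply₁₂,
      Matrix.zero_apply, Matrix.one_apply, mul_zero, Finset.sum_const_zero, zero_add,
      mul_ite, mul_one]
    rw [Finset.sum_ite_eq Finset.univ l (fun j => bB.repr u (Sum.inr j)),
      if_pos (Finset.mem_univ l)]
  set Orh : ℕ → Submodule k ((Fin m ⊕ Fin m) → k) :=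
    fun j => ⨅ (l : Fin m), ⨅ (_ : (l : ℕ) < j), LinearMap.ker (Bb k m (E l)) with hOrh
  have hOrmem : ∀ j u, u ∈ Orh j ↔ ∀ l : Fin m, (l : ℕ) < j → Bb k m (E l) u = 0 := by
    intro j u
    rw [hOrh]
    simp [Submodule.mem_iInf, LinearMap.mem_ker]
  have horthW : ∀ j, j ≤ m → ∀ u ∈ Orh j, ∀ w ∈ Vn j, Bb k m w u = 0 := by
    intro j hj u hu
    have hle : Vn j ≤ LinearMap.ker ((Bb k m).flip u) := by
      rw [hVn]; simp only; rw [Submodule.span_le]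
      rintro x ⟨a, ha, rfl⟩
      simp only [Set.mem_setOf_eq] at ha
      simp only [SetLike.mem_coe, LinearMap.mem_ker, LinearMap.flip_apply]
      exact (hOrmem j u).mp hu ⟨a, by omega⟩ (by simpa using ha)
    intro w hw
    exact hle hw
  have hOrVm : Orh m ≤ Vn m := by
    intro u hu
    have hu2 : ∀ l : Fin m, bB.repr u (Sum.inr l) = 0 := by
      intro l
      rw [hrep]
      exact (hOrmem m u).mp hu l l.isLt
    rw [← bB.sum_repr u, Fintype.sum_sum_type]
    refine Submodule.add_mem _ ?_ ?_
    · refine Submodule.sum_mem _ (fun i _ => Submodule.smul_mem _ _ ?_)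
      rw [hbBapply]
      exact Submodule.subset_span ⟨(i : ℕ), i.isLt, rfl⟩
    · refine Submodule.sum_mem _ (fun j _ => ?_)
      rw [hu2 j, zero_smul]
      exact Submodule.zero_mem _
  have hXOr : ∀ X ∈ 𝒮, ∀ j < m, ∀ u ∈ Orh j, X *ᵥ u ∈ Orh (j + 1) := by
    intro X hX j hjm u hu
    refine (hOrmem _ _).mpr (fun l hl => ?_)
    have h2 := hBsp X hX (E l) u
    have h1 : Bb k m (E l) (X *ᵥ u) = -(Bb k m (X *ᵥ E l) u) := by rw [h2, neg_neg]
    have h3 : X *ᵥ E l ∈ Vn j := by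
      refine Submodule.span_mono (Set.image_mono (f := e) (fun l' hl' => by
        simp only [Set.mem_setOf_eq] at hl' ⊢; omega)) (hinv X hX l l.isLt)
    rw [h1, horthW j (by omega) u hu _ h3, neg_zero]
  have hXhat : ∀ X ∈ 𝒮, ∀ t, 1 ≤ t → t ≤ 2 * m →
      ∀ u ∈ (if t ≤ m then Vn t else Orh (2 * m - t)),
        X *ᵥ u ∈ (if t - 1 ≤ m then Vn (t - 1) else Orh (2 * m - (t - 1))) := by
    intro X hX t ht1 ht2 u hu
    by_cases htm : t ≤ m
    · rw [if_pos htm] at hu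
      rw [if_pos (by omega : t - 1 ≤ m)]
      exact hXVvec X hX t htm u hu
    · rw [if_neg htm] at hu
      have h2 := hXOr X hX (2 * m - t) (by omega) u hu
      by_cases ht1m : t - 1 ≤ m
      · rw [if_pos ht1m]
        rw [show (2 * m - t) + 1 = m by omega] at h2
        rw [show t - 1 = m by omega]
        exact hOrVm h2
      · rw [if_neg ht1m, show 2 * m - (t - 1) = (2 * m - t) + 1 by omega]
        exact h2
  have himg : ∀ t, t ≤ 2 * m → ∀ v ∈ stdFlag k m t,
      h *ᵥ v ∈ (if t ≤ m then Vn t else Orh (2 * m - t)) := by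
    intro t ht v hv
    have hle : stdFlag k m t ≤
        Submodule.comap (Matrix.mulVecLin h)
          (if t ≤ m then Vn t else Orh (2 * m - t)) := by
      rw [stdFlag, Submodule.span_le]
      rintro x (⟨i, hi, rfl⟩ | ⟨j, hj, rfl⟩)
      · simp only [Set.mem_setOf_eq] at hi
        simp only [SetLike.mem_coe, Submodule.mem_comap, Matrix.mulVecLin_apply]
        rw [hcol]
        by_cases htm : t ≤ m
        · rw [if_pos htm]
          exact Submodule.subset_span ⟨(i : ℕ), hi, rfl⟩
        · rw [if_neg htm]
          exact (hOrmem _ _).mpr (fun l hl => hEE l i)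
      · simp only [Set.mem_setOf_eq] at hj
        simp only [SetLike.mem_coe, Submodule.mem_comap, Matrix.mulVecLin_apply]
        rw [hcol]
        by_cases htm : t ≤ m
        · exfalso
          have := j.isLt
          omega
        · rw [if_neg htm]
          refine (hOrmem _ _).mpr (fun l hl => ?_)
          have hlj : l ≠ j := by
            intro hlj
            subst hlj
            omega
          show Bb k m (E l) (f j) = 0
          rw [hEf l j, if_neg hlj]
    exact Submodule.mem_comap.mp (hle hv)
  have hback : ∀ s, s ≤ 2 * m →
      ∀ u ∈ (if s ≤ m then Vn s else Orh (2 * m - s)), h⁻¹ *ᵥ u ∈ stdFlag k m s := by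
    intro s hs u hu
    have hsingle : ∀ cc, h⁻¹ *ᵥ b cc = Pi.single cc 1 := by
      intro cc
      rw [← hcol cc, Matrix.mulVec_mulVec, Matrix.nonsing_inv_mul h hdet, Matrix.one_mulVec]
    have hmem_inl : ∀ i : Fin m, (i : ℕ) < s → Pi.single (Sum.inl i) (1 : k) ∈ stdFlag k m s :=
      fun i hi => Submodule.subset_span (Or.inl ⟨i, hi, rfl⟩)
    have hmem_inr : ∀ j : Fin m, 2 * m ≤ (j : ℕ) + s →
        Pi.single (Sum.inr j) (1 : k) ∈ stdFlag k m s :=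
      fun j hj => Submodule.subset_span (Or.inr ⟨j, hj, rfl⟩)
    by_cases hsm : s ≤ m
    · rw [if_pos hsm] at hu
      have hle : Vn s ≤ Submodule.comap (Matrix.mulVecLin h⁻¹) (stdFlag k m s) := by
        rw [hVn]; simp only; rw [Submodule.span_le]
        rintro x ⟨a, ha, rfl⟩
        simp only [Set.mem_setOf_eq] at ha
        simp only [SetLike.mem_coe, Submodule.mem_comap, Matrix.mulVecLin_apply]
        have hax : e a = b (Sum.inl ⟨a, by omega⟩) := rfl
        rw [hax, hsingle]
        exact hmem_inl ⟨a, by omega⟩ (by simpa using ha)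
      exact Submodule.mem_comap.mp (hle hu)
    · rw [if_neg hsm] at hu
      have hu2 : ∀ l : Fin m, (l : ℕ) < 2 * m - s → bB.repr u (Sum.inr l) = 0 := by
        intro l hl
        rw [hrep]
        exact (hOrmem _ _).mp hu l hl
      have hrw : h⁻¹ *ᵥ u = Matrix.mulVecLin h⁻¹ u := rfl
      rw [hrw, ← bB.sum_repr u, map_sum]
      refine Submodule.sum_mem _ ?_
      rintro (i | j) _
      · rw [_root_.map_smul, hbBapply, Matrix.mulVecLin_apply, hsingle]
        exact Submodule.smul_mem _ _ (hmem_inl i (by have := i.isLt; omega))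
      · by_cases hjs : 2 * m ≤ (j : ℕ) + s
        · rw [_root_.map_smul, hbBapply, Matrix.mulVecLin_apply, hsingle]
          exact Submodule.smul_mem _ _ (hmem_inr j hjs)
        · rw [hu2 j (by omega), zero_smul, map_zero]
          exact Submodule.zero_mem _
  refine ⟨h⁻¹, (Matrix.isUnit_iff_isUnit_det _).mpr (Matrix.isUnit_nonsing_inv_det h hdet),
    ?_, ?_⟩
  · have hinv1 : h * h⁻¹ = 1 := Matrix.mul_nonsing_inv h hdet
    have hassoc : (h⁻¹)ᵀ * (hᵀ * Jstd k m * h) * h⁻¹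
        = ((h * h⁻¹)ᵀ * Jstd k m) * (h * h⁻¹) := by
      rw [Matrix.transpose_mul]
      simp only [Matrix.mul_assoc]
    calc (h⁻¹)ᵀ * Jstd k m * h⁻¹ = (h⁻¹)ᵀ * (hᵀ * Jstd k m * h) * h⁻¹ := by rw [hGram']
      _ = ((h * h⁻¹)ᵀ * Jstd k m) * (h * h⁻¹) := hassoc
      _ = Jstd k m := by rw [hinv1, Matrix.transpose_one, Matrix.one_mul, Matrix.mul_one]
  · intro X hX t ht1 ht2 v hv
    have h1 := himg t ht2 v hv
    have h2 := hXhat X hX t ht1 ht2 _ h1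
    have h3 := hback (t - 1) (by omega) _ h2
    have hginv : (h⁻¹)⁻¹ = h := Matrix.nonsing_inv_nonsing_inv h hdet
    show (h⁻¹ * X * (h⁻¹)⁻¹) *ᵥ v ∈ stdFlag k m (t - 1)
    rw [hginv, ← Matrix.mulVec_mulVec, ← Matrix.mulVec_mulVec]
    exact h3
end

section
/- Let k be a field of characteristic p > 0, let n ≥ 1 and i < p a positive integer. For every monomial x_1^{i_1}⋯x_n^{i_n} of total degree i in the polynomial ring k[x_1,…,x_n], there exist finitely many homogeneous linear forms λ_0,…,λ_m in x_1,…,x_n and scalars a_0,…,a_m ∈ k such that x_1^{i_1}⋯x_n^{i_n} = a_0 λ_0^i + ⋯ + a_m λ_m^i. -/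
open MvPolynomial

open Finset in
private lemma my_inner_sum {R : Type*} [CommRing R] {i : ℕ} (T : Finset (Fin i)) :
    ∑ S : Finset (Fin i), (if T ⊆ S then ((-1:R)^(i - S.card)) else 0)
      = if T = univ then 1 else 0 := by
  classical
  rw [Finset.sum_ite, Finset.sum_const_zero, add_zero]
  have hbij : ∑ S ∈ univ.filter (fun S => T ⊆ S), ((-1:R)^(i - S.card))
      = ∑ U ∈ Tᶜ.powerset, ((-1:R)^U.card) := by
    refine Finset.sum_nbij' (fun S => Sᶜ) (fun U => Uᶜ) ?_ ?_ ?_ ?_ ?_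
    · intro S hS
      simp only [mem_filter, mem_powerset] at *
      exact compl_subset_compl.mpr hS.2
    · intro U hU
      simp only [mem_filter, mem_powerset] at *
      exact ⟨mem_univ _, by simpa using compl_subset_compl.mpr hU⟩
    · intro S _; simp
    · intro U _; simp
    · intro S hS
      congr 1
      rw [Finset.card_compl, Fintype.card_fin]
  rw [hbij]
  have hz := @Finset.sum_powerset_neg_one_pow_card (Fin i) _ Tᶜ
  have h2 : ∑ U ∈ Tᶜ.powerset, ((-1:R)^U.card)
      = ((∑ U ∈ Tᶜ.powerset, (-1:ℤ)^U.card : ℤ) : R) := by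
    push_cast; rfl
  rw [h2, hz]
  by_cases h : T = univ
  · simp [h]
  · have : Tᶜ ≠ ∅ := by
      simpa [Finset.compl_eq_empty_iff] using h
    simp [h, this]

open Finset in
private lemma my_polarization {R : Type*} [CommRing R] (i : ℕ) (y : Fin i → R) :
    ∑ S : Finset (Fin i), (-1:R)^(i - S.card) * (∑ m ∈ S, y m)^i
      = (Nat.factorial i) * ∏ m, y m := by
  classical
  have h1 : ∀ S : Finset (Fin i), (∑ m ∈ S, y m)^i
      = ∑ g ∈ Fintype.piFinset (fun _ : Fin i => S), ∏ m, y (g m) := by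
    intro S
    rw [← Finset.prod_univ_sum]
    rw [Finset.prod_const, Finset.card_univ, Fintype.card_fin]
  calc ∑ S : Finset (Fin i), (-1:R)^(i - S.card) * (∑ m ∈ S, y m)^i
      = ∑ S : Finset (Fin i), ∑ g : Fin i → Fin i,
          (if Finset.image g univ ⊆ S then (-1:R)^(i - S.card) * ∏ m, y (g m) else 0) := by
        refine Finset.sum_congr rfl fun S _ => ?_
        have hset : univ.filter (fun g : Fin i → Fin i => Finset.image g univ ⊆ S)
            = Fintype.piFinset (fun _ => S) := by
          ext g; simp [Fintype.mem_piFinset, Finset.image_subset_iff]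
        rw [h1, Finset.mul_sum, ← hset, Finset.sum_filter]
    _ = ∑ g : Fin i → Fin i, (∏ m, y (g m)) *
          ∑ S : Finset (Fin i), (if Finset.image g univ ⊆ S then (-1:R)^(i - S.card) else 0) := by
        rw [Finset.sum_comm]
        refine Finset.sum_congr rfl fun g _ => ?_
        rw [Finset.mul_sum]
        refine Finset.sum_congr rfl fun S _ => ?_
        rw [mul_ite, mul_zero, mul_comm]
    _ = ∑ g : Fin i → Fin i, (∏ m, y (g m)) * (if Finset.image g univ = univ then 1 else 0) := by
        refine Finset.sum_congr rfl fun g _ => ?_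
        rw [my_inner_sum]
    _ = ∑ g ∈ univ.filter (fun g : Fin i → Fin i => Function.Bijective g), ∏ m, y (g m) := by
        rw [Finset.sum_filter]
        refine Finset.sum_congr rfl fun g _ => ?_
        have : Finset.image g univ = univ ↔ Function.Bijective g := by
          rw [← Finset.coe_injective.eq_iff]
          simp only [Finset.coe_image, Finset.coe_univ, Set.image_univ]
          constructor
          · intro h
            have hs : Function.Surjective g := Set.range_eq_univ.mp h
            exact Finite.surjective_iff_bijective.mp hs
          · intro h; exact Set.range_eq_univ.mpr h.surjective
        rw [if_congr this rfl rfl, mul_ite, mul_one, mul_zero]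
    _ = (Nat.factorial i) * ∏ m, y m := by
        have hterm : ∀ g ∈ univ.filter (fun g : Fin i → Fin i => Function.Bijective g),
            ∏ m, y (g m) = ∏ m, y m := by
          intro g hg
          rw [Finset.mem_filter] at hg
          exact hg.2.prod_comp y
        rw [Finset.sum_congr rfl hterm, Finset.sum_const]
        have hcard : (univ.filter (fun g : Fin i → Fin i => Function.Bijective g)).card
            = (Nat.factorial i) := by
          rw [← Fintype.card_subtype]
          have e : {g : Fin i → Fin i // Function.Bijective g} ≃ Equiv.Perm (Fin i) :=
            { toFun := fun g => Equiv.ofBijective g.1 g.2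
              invFun := fun σ => ⟨σ, σ.bijective⟩
              left_inv := fun g => rfl
              right_inv := fun σ => Equiv.ext fun x => rfl }
          rw [Fintype.card_congr e, Fintype.card_perm, Fintype.card_fin]
        rw [hcard, nsmul_eq_mul]

/-- over a field of characteristic `p > i`, every monomial of degree `i`
in `n` variables is a linear combination of `i`-th powers of homogeneous linear forms. -/
theorem stmt_8 {k : Type*} [Field k] {p : ℕ} [Fact p.Prime] [CharP k p]
    (n : ℕ) (hn : 1 ≤ n) (i : ℕ) (hi : 0 < i) (hip : i < p)
    (d : Fin n →₀ ℕ) (hd : (d.sum fun _ e => e) = i) :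
    ∃ (m : ℕ) (a : Fin (m + 1) → k) (c : Fin (m + 1) → Fin n → k),
      (MvPolynomial.monomial d (1 : k)) =
        ∑ j : Fin (m + 1), a j • (∑ l : Fin n, c j l • (MvPolynomial.X l : MvPolynomial (Fin n) k)) ^ i := by
  classical
  -- factorial is invertible
  have hfac : (Nat.factorial i : k) ≠ 0 := by
    rw [Ne, CharP.cast_eq_zero_iff k p]
    intro hdvd
    have := (Nat.Prime.dvd_factorial (Fact.out)).mp hdvd
    omega
  -- enumeration of the monomial's variables with multiplicity
  set L := d.toMultiset.toList with hL
  have hlen : L.length = i := by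
    rw [hL, Multiset.length_toList, Finsupp.card_toMultiset, ← hd]
    rfl
  set e : Fin i → Fin n := fun m => L.get (Fin.cast hlen.symm m) with he
  have hprod : (∏ m : Fin i, (MvPolynomial.X (e m) : MvPolynomial (Fin n) k))
      = MvPolynomial.monomial d 1 := by
    have h1 : (∏ m : Fin i, (MvPolynomial.X (e m) : MvPolynomial (Fin n) k))
        = ∏ m : Fin L.length, (MvPolynomial.X (L.get m) : MvPolynomial (Fin n) k) := by
      exact Fintype.prod_equiv (finCongr hlen.symm) _ _ (fun m => rfl)
    rw [h1]
    have h2 : (∏ m : Fin L.length, (MvPolynomial.X (L.get m) : MvPolynomial (Fin n) k))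
        = (L.map (MvPolynomial.X : Fin n → MvPolynomial (Fin n) k)).prod := by
      exact Fin.prod_univ_fun_getElem L _
    rw [h2, hL]
    have h3 : ((d.toMultiset.map (MvPolynomial.X : Fin n → MvPolynomial (Fin n) k)).prod)
        = (d.toMultiset.toList.map (MvPolynomial.X : Fin n → MvPolynomial (Fin n) k)).prod := by
      conv_lhs => rw [← Multiset.coe_toList d.toMultiset]
      rw [Multiset.map_coe, Multiset.prod_coe]
    rw [← h3, Finsupp.toMultiset_map, Finsupp.prod_toMultiset,
      Finsupp.prod_mapDomain_index_inj (MvPolynomial.X_injective), monomial_eq, C_1, one_mul]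
  -- linear forms
  have hlin : ∀ S : Finset (Fin i),
      (∑ l : Fin n, (((S.filter fun m => e m = l).card : k)) • (MvPolynomial.X l : MvPolynomial (Fin n) k))
      = ∑ m ∈ S, MvPolynomial.X (e m) := by
    intro S
    rw [← Finset.sum_fiberwise S e (fun m => (MvPolynomial.X (e m) : MvPolynomial (Fin n) k))]
    refine Finset.sum_congr rfl fun l _ => ?_
    have hc : ∀ m ∈ S.filter (fun m => e m = l),
        (MvPolynomial.X (e m) : MvPolynomial (Fin n) k) = MvPolynomial.X l := by
      intro m hm; rw [(Finset.mem_filter.mp hm).2]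
    rw [Finset.sum_congr rfl hc, Finset.sum_const, Nat.cast_smul_eq_nsmul]
  -- index set
  set m : ℕ := 2 ^ i - 1 with hm
  have hcard : Fintype.card (Finset (Fin i)) = m + 1 := by
    rw [Fintype.card_finset, Fintype.card_fin, hm]
    have : 0 < 2 ^ i := Nat.pow_pos (by norm_num)
    omega
  set σ : Fin (m + 1) ≃ Finset (Fin i) := (Fintype.equivFinOfCardEq hcard).symm with hσ
  refine ⟨m, fun j => (Nat.factorial i : k)⁻¹ * (-1) ^ (i - (σ j).card),
    fun j l => (((σ j).filter fun mm => e mm = l).card : k), ?_⟩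
  have step1 : ∑ j : Fin (m + 1),
      ((Nat.factorial i : k)⁻¹ * (-1) ^ (i - (σ j).card)) •
        (∑ l : Fin n, ((((σ j).filter fun mm => e mm = l).card : k)) • (MvPolynomial.X l : MvPolynomial (Fin n) k)) ^ i
      = ∑ S : Finset (Fin i),
      ((Nat.factorial i : k)⁻¹ * (-1) ^ (i - S.card)) •
        (∑ mm ∈ S, (MvPolynomial.X (e mm) : MvPolynomial (Fin n) k)) ^ i := by
    refine Fintype.sum_equiv σ _ _ fun j => ?_
    rw [hlin]
  rw [step1]
  have step2 : ∑ S : Finset (Fin i),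
      ((Nat.factorial i : k)⁻¹ * (-1) ^ (i - S.card)) •
        (∑ mm ∈ S, (MvPolynomial.X (e mm) : MvPolynomial (Fin n) k)) ^ i
      = (Nat.factorial i : k)⁻¹ • ∑ S : Finset (Fin i),
        ((-1 : MvPolynomial (Fin n) k) ^ (i - S.card)) *
          (∑ mm ∈ S, (MvPolynomial.X (e mm) : MvPolynomial (Fin n) k)) ^ i := by
    rw [Finset.smul_sum]
    refine Finset.sum_congr rfl fun S _ => ?_
    rw [mul_smul, MvPolynomial.smul_eq_C_mul (a := ((-1 : k) ^ (i - S.card)))]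
    rw [map_pow, map_neg, C_1]
  rw [step2, my_polarization i (fun mm => (MvPolynomial.X (e mm) : MvPolynomial (Fin n) k)), hprod]
  rw [← nsmul_eq_mul, ← Nat.cast_smul_eq_nsmul k, inv_smul_smul₀ hfac]
end

section
/- Let g₁, …, g_s be finite-dimensional p-restricted Lie algebras over k and g = g₁ ⊕ ⋯ ⊕ g_s. If ε_i ⊆ g_i are elementary subalgebras of dimensions r_i, then ε₁ ⊕ ⋯ ⊕ ε_s is an elementary subalgebra of g of dimension r = Σ r_i. Moreover, if each r_i equals the maximal dimension of an elementary subalgebra of g_i, then every elementary subalgebra of g of dimension r is of this form, i.e., the map (ε₁,…,ε_s) ↦ ε₁ ⊕ ⋯ ⊕ ε_s from tuples of maximal-dimensional elementary subalgebras to elementary subalgebras of g of dimension r is a bijection. -/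
open DirectSum

section helpers
variable {k : Type*} [Field k] {ι : Type*} [Fintype ι] [DecidableEq ι]
    (L : ι → Type*) [∀ i, AddCommGroup (L i)] [∀ i, Module k (L i)]

theorem stmt15_mem_iSup_map_lof (η : ∀ i, Submodule k (L i)) (x : ⨁ i, L i) :
    x ∈ (⨆ i, (η i).map (DirectSum.lof k ι L i)) ↔ ∀ i, x i ∈ η i := by
  classical
  constructor
  · intro hx
    have key : (⨆ i, (η i).map (DirectSum.lof k ι L i)) ≤
        { carrier := {x | ∀ i, x i ∈ η i}
          add_mem' := fun ha hb i => by
            simpa using add_mem (ha i) (hb i)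
          zero_mem' := fun i => by simp
          smul_mem' := fun c a ha i => by
            simpa [DirectSum.smul_apply] using Submodule.smul_mem _ c (ha i) } := by
      refine iSup_le fun j => ?_
      rintro _ ⟨a, ha, rfl⟩ i
      rcases eq_or_ne j i with rfl | hji
      · simpa [DirectSum.lof_apply] using ha
      · have : (DirectSum.lof k ι L j a) i = 0 := by
          simpa [DirectSum.lof_eq_of] using DirectSum.of_eq_of_ne j i a hji.symm
        simp [this]
    exact key hx
  · intro hx
    rw [← DirectSum.sum_univ_of x]
    refine Submodule.sum_mem _ fun i _ => ?_
    refine Submodule.mem_iSup_of_mem i ?_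
    exact ⟨x i, hx i, by rw [DirectSum.lof_eq_of]⟩

theorem stmt15_finrank_iSup_map_lof [∀ i, Module.Finite k (L i)]
    (η : ∀ i, Submodule k (L i)) :
    Module.finrank k ↥(⨆ i, (η i).map (DirectSum.lof k ι L i)) =
      ∑ i, Module.finrank k ↥(η i) := by
  classical
  set f : (∀ i, ↥(η i)) →ₗ[k] ⨁ i, L i :=
    { toFun := fun v => ∑ i, DirectSum.lof k ι L i (v i)
      map_add' := fun v w => by simp [Finset.sum_add_distrib]
      map_smul' := fun c v => by simp [Finset.smul_sum] } with hf
  have hrange : LinearMap.range f = ⨆ i, (η i).map (DirectSum.lof k ι L i) := by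
    apply le_antisymm
    · rintro _ ⟨v, rfl⟩
      exact Submodule.sum_mem _ fun i _ =>
        Submodule.mem_iSup_of_mem i ⟨v i, (v i).2, rfl⟩
    · refine iSup_le fun i => ?_
      rintro _ ⟨a, ha, rfl⟩
      refine ⟨Pi.single i ⟨a, ha⟩, ?_⟩
      rw [hf]
      simp only [LinearMap.coe_mk, AddHom.coe_mk]
      rw [Finset.sum_eq_single i]
      · simp
      · intro j _ hji
        rw [Pi.single_eq_of_ne hji]
        simp
      · simp
  have hinj : Function.Injective f := by
    rw [← LinearMap.ker_eq_bot]
    refine (Submodule.eq_bot_iff _).2 fun v hv => ?_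
    have h0 : (∑ i, DirectSum.lof k ι L i (v i : L i)) = 0 := hv
    funext i
    have : ((∑ j, DirectSum.lof k ι L j (v j : L j)) : ⨁ i, L i) i = 0 := by rw [h0]; simp
    rw [DFinsupp.finset_sum_apply] at this
    rw [Finset.sum_eq_single i] at this
    · apply Subtype.ext
      simpa [DirectSum.lof_apply] using this
    · intro j _ hji
      simpa [DirectSum.lof_eq_of] using DirectSum.of_eq_of_ne j i _ hji.symm
    · simp
  calc Module.finrank k ↥(⨆ i, (η i).map (DirectSum.lof k ι L i))
      = Module.finrank k ↥(LinearMap.range f) := by rw [hrange]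
    _ = Module.finrank k (∀ i, ↥(η i)) := LinearMap.finrank_range_of_inj hinj
    _ = ∑ i, Module.finrank k ↥(η i) := Module.finrank_pi_fintype k

theorem stmt15_map_component_iSup (η : ∀ i, Submodule k (L i)) (i : ι) :
    ((⨆ j, (η j).map (DirectSum.lof k ι L j)).map (DirectSum.component k ι L i)) = η i := by
  ext a
  simp only [Submodule.mem_map]
  constructor
  · rintro ⟨y, hy, rfl⟩
    exact (stmt15_mem_iSup_map_lof L η y).1 hy i
  · intro ha
    refine ⟨DirectSum.lof k ι L i a, (stmt15_mem_iSup_map_lof L η _).2 fun j => ?_,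
      DirectSum.lof_apply k i a⟩
    rcases eq_or_ne i j with rfl | h
    · simpa [DirectSum.lof_apply] using ha
    · have : (DirectSum.lof k ι L i a) j = 0 := by
        simpa [DirectSum.lof_eq_of] using DirectSum.of_eq_of_ne i j a h.symm
      simp [this]

end helpers

/-- for restricted Lie algebras `L i` (with `p`-operations `pOp i`),
direct sums of elementary subalgebras `ε i ⊆ L i` are elementary subalgebras of
`⨁ i, L i` of dimension `∑ r i`; and if each `r i` is the maximal dimension of an
elementary subalgebra of `L i`, then every elementary subalgebra of `⨁ i, L i` of
dimension `∑ r i` is uniquely of this form. -/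
theorem stmt_15 {k : Type*} [Field k] {p : ℕ} [Fact p.Prime] [CharP k p]
    {ι : Type*} [Fintype ι] [DecidableEq ι]
    (L : ι → Type*) [∀ i, LieRing (L i)] [∀ i, LieAlgebra k (L i)]
    [∀ i, Module.Finite k (L i)]
    (pOp : ∀ i, L i → L i)                         -- the p-power operations
    (r : ι → ℕ)
    (ε : ∀ i, LieSubalgebra k (L i))
    (helem : ∀ i, (∀ x ∈ ε i, ∀ y ∈ ε i, ⁅x, y⁆ = 0) ∧ (∀ x ∈ ε i, pOp i x = 0))
    (hrk : ∀ i, Module.finrank k (ε i) = r i) :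
    -- (i) the direct sum of the `ε i` is an elementary subalgebra of dimension `∑ r i`:
    (∃ E : LieSubalgebra k (⨁ i, L i),
       E.toSubmodule = ⨆ i, (ε i).toSubmodule.map (DirectSum.lof k ι L i) ∧
       (∀ x ∈ E, ∀ y ∈ E, ⁅x, y⁆ = 0) ∧
       (∀ x ∈ E, ∀ i, pOp i (x i) = 0) ∧
       Module.finrank k E = ∑ i, r i)
    ∧
    -- (ii) if each `r i` is maximal, every elementary subalgebra of dimension `∑ r i`
    -- arises from a unique tuple of maximal-dimensional elementary subalgebras:
    ((∀ i, ∀ η : LieSubalgebra k (L i),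
        (∀ x ∈ η, ∀ y ∈ η, ⁅x, y⁆ = 0) → (∀ x ∈ η, pOp i x = 0) →
        Module.finrank k η ≤ r i) →
      ∀ E : LieSubalgebra k (⨁ i, L i),
        (∀ x ∈ E, ∀ y ∈ E, ⁅x, y⁆ = 0) →
        (∀ x ∈ E, ∀ i, pOp i (x i) = 0) →
        Module.finrank k E = ∑ i, r i →
        ∃! η : ∀ i, LieSubalgebra k (L i),
          (∀ i, (∀ x ∈ η i, ∀ y ∈ η i, ⁅x, y⁆ = 0) ∧ (∀ x ∈ η i, pOp i x = 0) ∧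
                Module.finrank k (η i) = r i) ∧
          E.toSubmodule = ⨆ i, (η i).toSubmodule.map (DirectSum.lof k ι L i)) := by
  classical
  have hfin : Module.Finite k (⨁ i, L i) :=
    Module.Finite.equiv (DirectSum.linearEquivFunOnFintype k ι L).symm
  constructor
  · -- part (i)
    set S : Submodule k (⨁ i, L i) :=
      ⨆ i, (ε i).toSubmodule.map (DirectSum.lof k ι L i) with hS
    have hmemS : ∀ x, x ∈ S ↔ ∀ i, x i ∈ ε i := fun x =>
      stmt15_mem_iSup_map_lof L (fun i => (ε i).toSubmodule) x
    have habS : ∀ x ∈ S, ∀ y ∈ S, ⁅x, y⁆ = (0 : ⨁ i, L i) := by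
      intro x hx y hy
      refine DFinsupp.ext fun i => ?_
      rw [DirectSum.bracket_apply]
      simpa using (helem i).1 _ ((hmemS x).1 hx i) _ ((hmemS y).1 hy i)
    refine ⟨{ toSubmodule := S
              lie_mem' := fun {x y} hx hy => by
                have : ⁅x, y⁆ = (0 : ⨁ i, L i) := habS x hx y hy
                rw [this]; exact S.zero_mem }, rfl, ?_, ?_, ?_⟩
    · exact habS
    · intro x hx i
      exact (helem i).2 _ ((hmemS x).1 hx i)
    · have := stmt15_finrank_iSup_map_lof (k := k) L (fun i => (ε i).toSubmodule)
      change Module.finrank k ↥S = _ at this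
      rw [show Module.finrank k
          ↥({ toSubmodule := S,
              lie_mem' := fun {x y} hx hy => by
                have : ⁅x, y⁆ = (0 : ⨁ i, L i) := habS x hx y hy
                rw [this]; exact S.zero_mem } : LieSubalgebra k (⨁ i, L i)) =
          Module.finrank k ↥S from rfl, this]
      exact Finset.sum_congr rfl fun i _ => hrk i
  · -- part (ii)
    intro hmax E habel hpE hdim
    set η0 : ∀ i, Submodule k (L i) :=
      fun i => (E.toSubmodule).map (DirectSum.component k ι L i) with hη0
    have hmem0 : ∀ i a, a ∈ η0 i ↔ ∃ x ∈ E, x i = a := by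
      intro i a; rfl
    have hbr : ∀ i, ∀ a ∈ η0 i, ∀ b ∈ η0 i, ⁅a, b⁆ = (0 : L i) := by
      intro i a ha b hb
      obtain ⟨x, hx, rfl⟩ := (hmem0 i a).1 ha
      obtain ⟨y, hy, rfl⟩ := (hmem0 i b).1 hb
      have : ⁅x, y⁆ = (0 : ⨁ i, L i) := habel x hx y hy
      calc ⁅x i, y i⁆ = ⁅x, y⁆ i := (DirectSum.bracket_apply L x y i).symm
        _ = (0 : ⨁ i, L i) i := by rw [this]
        _ = 0 := by simp
    set ηL : ∀ i, LieSubalgebra k (L i) := fun i =>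
      { toSubmodule := η0 i
        lie_mem' := fun {a b} ha hb => by
          have : ⁅a, b⁆ = (0 : L i) := hbr i a ha b hb
          rw [this]; exact (η0 i).zero_mem } with hηL
    have hp0 : ∀ i, ∀ a ∈ η0 i, pOp i a = 0 := by
      intro i a ha
      obtain ⟨x, hx, rfl⟩ := (hmem0 i a).1 ha
      exact hpE x hx i
    have hle_i : ∀ i, Module.finrank k ↥(η0 i) ≤ r i := fun i =>
      hmax i (ηL i) (hbr i) (hp0 i)
    have hEle : E.toSubmodule ≤ ⨆ i, (η0 i).map (DirectSum.lof k ι L i) := by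
      intro x hx
      exact (stmt15_mem_iSup_map_lof L η0 x).2 fun i => ⟨x, hx, rfl⟩
    have hSrk : Module.finrank k ↥(⨆ i, (η0 i).map (DirectSum.lof k ι L i)) =
        ∑ i, Module.finrank k ↥(η0 i) := stmt15_finrank_iSup_map_lof L η0
    have hEfr : Module.finrank k ↥(E.toSubmodule) = ∑ i, r i := hdim
    have hEeq : E.toSubmodule = ⨆ i, (η0 i).map (DirectSum.lof k ι L i) := by
      refine Submodule.eq_of_le_of_finrank_le hEle ?_
      rw [hSrk, hEfr]
      exact Finset.sum_le_sum fun i _ => hle_i i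
    have hsum_eq : ∑ i, Module.finrank k ↥(η0 i) = ∑ i, r i := by
      rw [← hSrk, ← hEeq, hEfr]
    have hrk_i : ∀ i, Module.finrank k ↥(η0 i) = r i := by
      intro i
      have := (Finset.sum_eq_sum_iff_of_le (fun i _ => hle_i i)).1 hsum_eq
      exact this i (Finset.mem_univ i)
    refine ⟨ηL, ⟨fun i => ⟨hbr i, hp0 i, hrk_i i⟩, hEeq⟩, ?_⟩
    rintro η' ⟨-, heq'⟩
    funext i
    apply LieSubalgebra.toSubmodule_injective
    have hmap := congrArg (Submodule.map (DirectSum.component k ι L i)) heq'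
    rw [stmt15_map_component_iSup L (fun j => (η' j).toSubmodule) i] at hmap
    exact hmap.symm
end
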